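/- arXiv:1209.1511 — 3 statements merged into one kernel-verified Lean document; each statement's English description precedes it below -/
import Mathlib

section
/- If X is a subadditive double-indexed sequence (X_{0,n} ≤ X_{0,m} + X_{m,n} for all m ≤ n) of integrable random variables such that for each k the sequence (X_{nk,(n+1)k})_{n≥0} is i.i.d., each (X_{n,n+k})_{k≥0} has the same distribution as (X_{0,k})_{k≥0}, and sup_n E[|X_{0,n}|]/n < ∞, then X_{0,n}/n converges almost surely and in L^1 to v := inf_n E[X_{0,n}]/n. -/
open MeasureTheory ProbabilityTheory Filter Set
open scoped Topology ENNReal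

noncomputable section LiggettHelpers

/-- clamp to `[-M, M]` -/
def lseClamp (M x : ℝ) : ℝ := max (min x M) (-M)

lemma lseClamp_mono {M : ℝ} : Monotone (lseClamp M) :=
  fun _ _ h => max_le_max (min_le_min h le_rfl) le_rfl

lemma lseClamp_le {M x : ℝ} (hM : 0 ≤ M) : lseClamp M x ≤ M :=
  max_le (min_le_right _ _) (by linarith)

lemma neg_le_lseClamp {M x : ℝ} : -M ≤ lseClamp M x := le_max_right _ _

lemma lseClamp_le_of_le {M x b : ℝ} (hb : -M ≤ b) (h : x ≤ b) : lseClamp M x ≤ b :=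
  max_le (le_trans (min_le_left _ _) h) hb

lemma le_of_lseClamp_le {M x b : ℝ} (hbM : b < M) (h : lseClamp M x ≤ b) : x ≤ b := by
  rcases le_or_gt x M with h1 | h1
  · calc x = min x M := (min_eq_left h1).symm
      _ ≤ lseClamp M x := le_max_left _ _
      _ ≤ b := h
  · exfalso
    have h2 : min x M = M := min_eq_right h1.le
    have : (M:ℝ) ≤ b := le_trans (by rw [lseClamp, h2]; exact le_max_left _ _) h
    linarith

lemma measurable_lseClamp {M : ℝ} : Measurable (lseClamp M) :=
  (measurable_id.min measurable_const).max measurable_const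

/-- truncated liminf functional on sequence space -/
def lseEll (M : ℝ) (y : ℕ → ℝ) : ℝ :=
  liminf (fun t : ℕ => lseClamp M (y t / t)) atTop

lemma measurable_lseEll {M : ℝ} : Measurable (lseEll M) := by
  apply Measurable.liminf
  intro t
  exact measurable_lseClamp.comp ((measurable_pi_apply t).div_const _)

lemma lseEll_bddBelow {M : ℝ} (hM : 0 ≤ M) (y : ℕ → ℝ) : -M ≤ lseEll M y := by
  refine le_liminf_of_le (isCoboundedUnder_ge_of_le atTop (fun t => lseClamp_le hM)) ?_
  exact Eventually.of_forall (fun t => le_max_right _ _)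

lemma lseEll_le_of_frequently_le {M b : ℝ} {y : ℕ → ℝ}
    (h : ∃ᶠ t : ℕ in atTop, lseClamp M (y t / t) ≤ b) : lseEll M y ≤ b :=
  liminf_le_of_frequently_le h
    ⟨-M, eventually_map.2 (Eventually.of_forall fun _ => neg_le_lseClamp)⟩

lemma lseEll_le {M : ℝ} (hM : 0 ≤ M) (y : ℕ → ℝ) : lseEll M y ≤ M :=
  lseEll_le_of_frequently_le (Frequently.of_forall fun _ => lseClamp_le hM)

lemma frequently_of_lseEll_lt {M b : ℝ} (hM : 0 ≤ M) {y : ℕ → ℝ} (h : lseEll M y < b) :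
    ∃ᶠ t : ℕ in atTop, lseClamp M (y t / t) < b :=
  frequently_lt_of_liminf_lt (isCoboundedUnder_ge_of_le atTop fun _ => lseClamp_le hM) h

/-- first hitting time functional -/
def lseT (M ε : ℝ) (y : ℕ → ℝ) : ℕ :=
  sInf {t : ℕ | 1 ≤ t ∧ y t ≤ (lseEll M y + ε) * t}

lemma lseT_spec {M ε : ℝ} {y : ℕ → ℝ} (h : 1 ≤ lseT M ε y) :
    y (lseT M ε y) ≤ (lseEll M y + ε) * (lseT M ε y) := by
  by_cases hne : {t : ℕ | 1 ≤ t ∧ y t ≤ (lseEll M y + ε) * t}.Nonempty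
  · exact (Nat.sInf_mem hne).2
  · exfalso
    rw [Set.not_nonempty_iff_eq_empty] at hne
    rw [lseT, hne, Nat.sInf_empty] at h
    omega

lemma lseT_eq_zero_iff {M ε : ℝ} {y : ℕ → ℝ} :
    lseT M ε y = 0 ↔ ∀ t : ℕ, ¬(1 ≤ t ∧ y t ≤ (lseEll M y + ε) * t) := by
  constructor
  · intro h0 t ht
    have hne : {t : ℕ | 1 ≤ t ∧ y t ≤ (lseEll M y + ε) * t}.Nonempty := ⟨t, ht⟩
    have hmem := Nat.sInf_mem hne
    rw [show sInf {t : ℕ | 1 ≤ t ∧ y t ≤ (lseEll M y + ε) * t} = lseT M ε y from rfl, h0] at hmem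
    exact absurd hmem.1 (by omega)
  · intro h
    have : {t : ℕ | 1 ≤ t ∧ y t ≤ (lseEll M y + ε) * t} = ∅ :=
      Set.eq_empty_iff_forall_notMem.2 h
    rw [lseT, this, Nat.sInf_empty]

lemma lseT_eq_iff {M ε : ℝ} {y : ℕ → ℝ} {j : ℕ} (hj : 1 ≤ j) :
    lseT M ε y = j ↔ (y j ≤ (lseEll M y + ε) * j ∧
      ∀ t : ℕ, t < j → ¬(1 ≤ t ∧ y t ≤ (lseEll M y + ε) * t)) := by
  set S := {t : ℕ | 1 ≤ t ∧ y t ≤ (lseEll M y + ε) * t} with hS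
  constructor
  · intro h0
    have hne : S.Nonempty := by
      by_contra hne
      rw [Set.not_nonempty_iff_eq_empty] at hne
      rw [lseT, ← hS, hne, Nat.sInf_empty] at h0
      omega
    have hmem := Nat.sInf_mem hne
    rw [show sInf S = lseT M ε y from rfl, h0] at hmem
    refine ⟨hmem.2, fun t ht htS => ?_⟩
    have := Nat.sInf_le (show t ∈ S from htS)
    rw [show sInf S = lseT M ε y from rfl, h0] at this
    omega
  · rintro ⟨h1, h2⟩
    have hjS : j ∈ S := ⟨hj, h1⟩
    have hle : lseT M ε y ≤ j := Nat.sInf_le hjS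
    have hge : ¬ lseT M ε y < j := by
      intro hc
      exact h2 _ hc (Nat.sInf_mem ⟨j, hjS⟩)
    omega

lemma measurable_lseT {M ε : ℝ} : Measurable (lseT M ε) := by
  have hA : ∀ t : ℕ, MeasurableSet {y : ℕ → ℝ | 1 ≤ t ∧ y t ≤ (lseEll M y + ε) * t} := by
    intro t
    by_cases ht : 1 ≤ t
    · simp only [ht, true_and]
      exact measurableSet_le (measurable_pi_apply t)
        ((measurable_lseEll.add_const ε).mul_const _)
    · simp only [ht, false_and]
      exact MeasurableSet.empty
  have hB : ∀ t : ℕ, MeasurableSet {y : ℕ → ℝ | y t ≤ (lseEll M y + ε) * t} := by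
    intro t
    exact measurableSet_le (measurable_pi_apply t)
      ((measurable_lseEll.add_const ε).mul_const _)
  apply measurable_to_countable'
  intro j
  rcases Nat.eq_zero_or_pos j with rfl | hj
  · have : lseT M ε ⁻¹' {0} = ⋂ t, {y : ℕ → ℝ | 1 ≤ t ∧ y t ≤ (lseEll M y + ε) * t}ᶜ := by
      ext y
      simp only [Set.mem_preimage, Set.mem_singleton_iff, Set.mem_iInter, Set.mem_compl_iff,
        Set.mem_setOf_eq]
      exact lseT_eq_zero_iff
    rw [this]
    exact MeasurableSet.iInter fun t => (hA t).compl
  · have : lseT M ε ⁻¹' {j} = ({y : ℕ → ℝ | y j ≤ (lseEll M y + ε) * j} ∩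
        ⋂ t, ⋂ (_ : t < j), {y : ℕ → ℝ | 1 ≤ t ∧ y t ≤ (lseEll M y + ε) * t}ᶜ) := by
      ext y
      simp only [Set.mem_preimage, Set.mem_singleton_iff, Set.mem_inter_iff, Set.mem_iInter,
        Set.mem_compl_iff, Set.mem_setOf_eq]
      rw [lseT_eq_iff hj]
    rw [this]
    exact (hB j).inter (MeasurableSet.iInter fun t =>
      MeasurableSet.iInter fun _ => (hA t).compl)

variable {Ω : Type*} [MeasurableSpace Ω] {μ : Measure Ω}

lemma identDistrib_comp_of_map_eq {E : Type*} [MeasurableSpace E] {F G : Ω → ℕ → ℝ}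
    (hF : Measurable F) (hG : Measurable G) (h : μ.map F = μ.map G)
    {φ : (ℕ → ℝ) → E} (hφ : Measurable φ) :
    IdentDistrib (φ ∘ F) (φ ∘ G) μ μ :=
  IdentDistrib.comp ⟨hF.aemeasurable, hG.aemeasurable, h⟩ hφ

/-- Borel-Cantelli consequence for identically distributed integrable variables. -/
lemma ae_eventually_le_of_identDistrib [IsProbabilityMeasure μ] {Z : ℕ → Ω → ℝ} {W : Ω → ℝ}
    (hW : Integrable W μ) (hWpos : 0 ≤ W)
    (hid : ∀ q, IdentDistrib (Z q) W μ μ) :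
    ∀ᵐ ω ∂μ, ∀ᶠ q : ℕ in atTop, Z q ω ≤ q := by
  have hsum : (∑' q : ℕ, μ {ω | ω ∈ Z q ⁻¹' Set.Ioi (q:ℝ)}) ≠ ∞ := by
    have he : ∀ q : ℕ, μ {ω | ω ∈ Z q ⁻¹' Set.Ioi (q:ℝ)} = μ {ω | W ω ∈ Set.Ioi (q:ℝ)} := by
      intro q
      exact (hid q).measure_mem_eq measurableSet_Ioi
    rw [tsum_congr he]
    letI : MeasureSpace Ω := ⟨μ⟩
    exact (tsum_prob_mem_Ioi_lt_top hW hWpos).ne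
  filter_upwards [MeasureTheory.ae_eventually_notMem hsum] with ω hω
  filter_upwards [hω] with q hq
  simpa using not_lt.1 (fun hc => hq hc)

/-- Scheffé-type lemma. -/
lemma tendsto_integral_abs_sub_zero [IsFiniteMeasure μ] {g : ℕ → Ω → ℝ} {G : Ω → ℝ}
    (hg : ∀ n, Integrable (g n) μ) (hG : Integrable G μ)
    (hnn : ∀ n, 0 ≤ᵐ[μ] g n)
    (hae : ∀ᵐ ω ∂μ, Tendsto (fun n => g n ω) atTop (𝓝 (G ω)))
    (hi : Tendsto (fun n => ∫ ω, g n ω ∂μ) atTop (𝓝 (∫ ω, G ω ∂μ))) :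
    Tendsto (fun n => ∫ ω, |g n ω - G ω| ∂μ) atTop (𝓝 0) := by
  have hGnn : 0 ≤ᵐ[μ] G := by
    have h1 : ∀ᵐ ω ∂μ, (∀ n, 0 ≤ g n ω) ∧ Tendsto (fun n => g n ω) atTop (𝓝 (G ω)) := by
      filter_upwards [ae_all_iff.2 hnn, hae] with ω h1 h2 using ⟨h1, h2⟩
    filter_upwards [h1] with ω hw
    exact le_of_tendsto_of_tendsto tendsto_const_nhds hw.2 (Eventually.of_forall hw.1)
  have hmin_int : ∀ n, Integrable (fun ω => min (g n ω) (G ω)) μ :=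
    fun n => Integrable.inf (hg n) hG
  have hmin : Tendsto (fun n => ∫ ω, min (g n ω) (G ω) ∂μ) atTop (𝓝 (∫ ω, G ω ∂μ)) := by
    apply tendsto_integral_of_dominated_convergence (fun ω => |G ω|)
      (fun n => (hmin_int n).1) hG.abs
    · intro n
      filter_upwards [hnn n, hGnn] with ω h1 h2
      rw [Real.norm_eq_abs, abs_le]
      refine ⟨le_trans (neg_nonpos.2 (abs_nonneg _)) (le_min h1 h2),
        le_trans (min_le_right _ _) (le_abs_self _)⟩
    · filter_upwards [hae] with ω h
      have : Tendsto (fun n => min (g n ω) (G ω)) atTop (𝓝 (min (G ω) (G ω))) :=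
        Tendsto.min h tendsto_const_nhds
      simpa using this
  have key : ∀ n, ∫ ω, |g n ω - G ω| ∂μ
      = ∫ ω, g n ω ∂μ + ∫ ω, G ω ∂μ - 2 * ∫ ω, min (g n ω) (G ω) ∂μ := by
    intro n
    have h2 : ∀ ω, |g n ω - G ω| = g n ω + G ω - 2 * min (g n ω) (G ω) := by
      intro ω
      rcases le_total (g n ω) (G ω) with h | h
      · rw [min_eq_left h, abs_of_nonpos (by linarith)]; ring
      · rw [min_eq_right h, abs_of_nonneg (by linarith)]; ring
    simp_rw [h2]
    have hA : Integrable (fun ω => g n ω + G ω) μ := (hg n).add hG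
    have hB : Integrable (fun ω => 2 * min (g n ω) (G ω)) μ := (hmin_int n).const_mul 2
    have hA1 : Integrable (fun ω => g n ω) μ := hg n
    have hA2 : Integrable (fun ω => G ω) μ := hG
    rw [integral_sub hA hB, integral_add hA1 hA2, integral_const_mul]
  simp_rw [key]
  have h2 := (hi.add (tendsto_const_nhds (x := ∫ ω, G ω ∂μ))).sub (hmin.const_mul 2)
  have h3 : (∫ ω, G ω ∂μ) + (∫ ω, G ω ∂μ) - 2 * (∫ ω, G ω ∂μ) = 0 := by ring
  rw [h3] at h2
  exact h2

end LiggettHelpers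

set_option maxHeartbeats 2000000 in
/-- Liggett's subadditive ergodic theorem, in the form used in the paper. -/
theorem liggett_subadditive_ergodic
    {Ω : Type*} [MeasurableSpace Ω] (μ : Measure Ω) [IsProbabilityMeasure μ]
    (X : ℕ → ℕ → Ω → ℝ)
    (hmeas : ∀ m n, Measurable (X m n))
    (hint : ∀ m n, Integrable (X m n) μ)
    (hsub : ∀ m n : ℕ, m ≤ n → ∀ ω, X 0 n ω ≤ X 0 m ω + X m n ω)
    (hstat : ∀ n : ℕ, μ.map (fun ω => fun k : ℕ => X n (n + k) ω)
        = μ.map (fun ω => fun k : ℕ => X 0 k ω))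
    (hindep : ∀ k : ℕ, 1 ≤ k →
        iIndepFun (fun (n : ℕ) ω => X (n * k) ((n + 1) * k) ω) μ)
    (hident : ∀ k n : ℕ, 1 ≤ k →
        IdentDistrib (fun ω => X (n * k) ((n + 1) * k) ω) (fun ω => X 0 k ω) μ μ)
    (hbd : ∃ C : ℝ, ∀ n : ℕ, 1 ≤ n → (∫ ω, |X 0 n ω| ∂μ) / n ≤ C)
    (v : ℝ)
    (hv : IsGLB {x : ℝ | ∃ n : ℕ, 1 ≤ n ∧ x = (∫ ω, X 0 n ω ∂μ) / n} v) :
    (∀ᵐ ω ∂μ, Tendsto (fun n : ℕ => X 0 n ω / n) atTop (𝓝 v)) ∧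
      Tendsto (fun n : ℕ => ∫ ω, |X 0 n ω / n - v| ∂μ) atTop (𝓝 0) := by
  classical
  -- the mean sequence
  set a : ℕ → ℝ := fun n => ∫ ω, X 0 n ω ∂μ with ha
  -- measurability of the shifted sequence maps
  have hseqm : ∀ m : ℕ, Measurable (fun ω => fun k : ℕ => X m (m + k) ω) := by
    intro m
    exact measurable_pi_lambda _ (fun k => hmeas m (m + k))
  have hseq0 : Measurable (fun ω => fun k : ℕ => X 0 k ω) :=
    measurable_pi_lambda _ (fun k => hmeas 0 k)
  -- identical--distribution transfer along the shift
  have hID : ∀ (m : ℕ) {E : Type} [MeasurableSpace E] (φ : (ℕ → ℝ) → E), Measurable φ →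
      IdentDistrib (fun ω => φ (fun k => X m (m + k) ω)) (fun ω => φ (fun k => X 0 k ω)) μ μ := by
    intro m E _ φ hφ
    exact identDistrib_comp_of_map_eq (hseqm m) hseq0 (hstat m) hφ
  -- single variable transfer
  have hXid : ∀ m k : ℕ, IdentDistrib (X m (m + k)) (X 0 k) μ μ := by
    intro m k
    exact hID m (fun y => y k) (measurable_pi_apply k)
  have haint : ∀ m k : ℕ, ∫ ω, X m (m + k) ω ∂μ = a k := fun m k => (hXid m k).integral_eq
  have habs : ∀ m k : ℕ, ∫ ω, |X m (m + k) ω| ∂μ = ∫ ω, |X 0 k ω| ∂μ := by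
    intro m k
    exact ((hXid m k).comp measurable_abs).integral_eq
  -- Fekete
  have hA : Subadditive a := by
    intro m n
    calc a (m + n) = ∫ ω, X 0 (m + n) ω ∂μ := rfl
      _ ≤ ∫ ω, (X 0 m ω + X m (m + n) ω) ∂μ := by
          apply integral_mono (hint 0 (m + n)) ((hint 0 m).add (hint m (m + n)))
          intro ω
          exact hsub m (m + n) (Nat.le_add_right m n) ω
      _ = a m + ∫ ω, X m (m + n) ω ∂μ := integral_add (hint 0 m) (hint m (m + n))
      _ = a m + a n := by rw [haint m n]
  have hvle : ∀ n : ℕ, 1 ≤ n → v ≤ a n / n := by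
    intro n hn
    exact hv.1 ⟨n, hn, rfl⟩
  have hak : Tendsto (fun n => a n / n) atTop (𝓝 v) := by
    have hbdd : BddBelow (Set.range fun n : ℕ => a n / n) := by
      refine ⟨min v 0, ?_⟩
      rintro x ⟨n, rfl⟩
      rcases Nat.eq_zero_or_pos n with rfl | hn
      · simp
      · exact le_trans (min_le_left _ _) (hvle n hn)
    have hlim : hA.lim = v := by
      rw [Subadditive.lim]
      have hSeq : ((fun n : ℕ => a n / n) '' Set.Ici 1)
          = {x : ℝ | ∃ n : ℕ, 1 ≤ n ∧ x = (∫ ω, X 0 n ω ∂μ) / n} := by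
        ext x
        simp only [Set.mem_image, Set.mem_Ici, Set.mem_setOf_eq]
        constructor
        · rintro ⟨n, hn, rfl⟩; exact ⟨n, hn, rfl⟩
        · rintro ⟨n, hn, rfl⟩; exact ⟨n, hn, rfl⟩
      rw [hSeq]
      exact hv.csInf_eq ⟨a 1 / ((1:ℕ):ℝ), 1, le_rfl, rfl⟩
    have := hA.tendsto_lim hbdd
    rwa [hlim] at this
  -- step 1 : a.s. upper bound
  have hchain : ∀ (k : ℕ), ∀ ω, ∀ q : ℕ, 1 ≤ q →
      X 0 (q * k) ω ≤ ∑ i ∈ Finset.range q, X (i * k) ((i + 1) * k) ω := by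
    intro k ω q hq
    induction q with
    | zero => omega
    | succ q ih =>
      rcases Nat.eq_zero_or_pos q with rfl | hq'
      · rw [Finset.sum_range_one]
        norm_num
      · calc X 0 ((q + 1) * k) ω ≤ X 0 (q * k) ω + X (q * k) ((q + 1) * k) ω :=
              hsub _ _ (Nat.mul_le_mul_right k (Nat.le_succ q)) ω
          _ ≤ (∑ i ∈ Finset.range q, X (i * k) ((i + 1) * k) ω) + X (q * k) ((q + 1) * k) ω :=
              add_le_add (ih hq') le_rfl
          _ = ∑ i ∈ Finset.range (q + 1), X (i * k) ((i + 1) * k) ω :=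
              (Finset.sum_range_succ _ q).symm
  have hup : ∀ᵐ ω ∂μ, ∀ k : ℕ, 1 ≤ k → ∀ᶠ n : ℕ in atTop, X 0 n ω / n ≤ a k / k + 2 / k := by
    rw [ae_all_iff]
    intro k
    by_cases hk : 1 ≤ k
    swap
    · exact Eventually.of_forall fun ω hk' => absurd hk' hk
    have hk0 : 0 < k := hk
    have hkR : (0:ℝ) < k := by exact_mod_cast hk0
    -- strong law of large numbers for the blocks
    have hBindep : Pairwise (Function.onFun (IndepFun · · μ) (fun (i : ℕ) ω => X (i * k) ((i + 1) * k) ω)) :=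
      fun i j hij => (hindep k hk).indepFun hij
    have hBident : ∀ i, IdentDistrib (fun ω => X (i * k) ((i + 1) * k) ω)
        (fun ω => X (0 * k) ((0 + 1) * k) ω) μ μ :=
      fun i => (hident k i hk).trans (hident k 0 hk).symm
    have hSL := strong_law_ae_real (fun (i : ℕ) ω => X (i * k) ((i + 1) * k) ω)
      (hint (0 * k) ((0 + 1) * k)) hBindep hBident
    have hEB : ∫ ω, X (0 * k) ((0 + 1) * k) ω ∂μ = a k := (hident k 0 hk).integral_eq
    rw [show (μ[fun ω => X (0 * k) ((0 + 1) * k) ω]) = ∫ ω, X (0 * k) ((0 + 1) * k) ω ∂μ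
      from rfl, hEB] at hSL
    -- Borel--Cantelli control on the remainders
    have hrem : ∀ᵐ ω ∂μ, ∀ r : ℕ, ∀ᶠ q : ℕ in atTop,
        X (q * k) (q * k + r) ω ≤ q := by
      rw [ae_all_iff]
      intro r
      have hBC := ae_eventually_le_of_identDistrib (μ := μ)
        (Z := fun q ω => |X (q * k) (q * k + r) ω|) (W := fun ω => |X 0 r ω|)
        (hint 0 r).abs (fun ω => abs_nonneg _)
        (fun q => (hXid (q * k) r).comp measurable_abs)
      filter_upwards [hBC] with ω hω
      filter_upwards [hω] with q hq
      exact le_trans (le_abs_self _) hq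
    filter_upwards [hSL, hrem] with ω hω1 hω2
    intro _
    -- pointwise reasoning
    have hqq : Tendsto (fun n : ℕ => n / k) atTop atTop := by
      apply tendsto_atTop_atTop.2
      intro b
      exact ⟨b * k, fun n hn => (Nat.le_div_iff_mul_le hk0).2 hn⟩
    have hqn : Tendsto (fun n : ℕ => ((n / k : ℕ) : ℝ) / n) atTop (𝓝 (1 / k)) := by
      have hdiff : Tendsto (fun n : ℕ => ((n / k : ℕ) : ℝ) / n - 1 / k) atTop (𝓝 0) := by
        apply squeeze_zero_norm' (a := fun n : ℕ => 1 / (n:ℝ))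
        · filter_upwards [eventually_ge_atTop 1] with n hn
          have hnR : (0:ℝ) < n := by exact_mod_cast hn
          have hmod : (k : ℝ) * ((n / k : ℕ) : ℝ) + ((n % k : ℕ) : ℝ) = n := by
            exact_mod_cast congrArg (Nat.cast : ℕ → ℝ) (Nat.div_add_mod n k)
          have hmodlt : ((n % k : ℕ) : ℝ) < k := by
            exact_mod_cast Nat.mod_lt n hk0
          have hmodnn : (0:ℝ) ≤ ((n % k : ℕ) : ℝ) := Nat.cast_nonneg _
          rw [Real.norm_eq_abs]
          have he : ((n / k : ℕ) : ℝ) / n - 1 / k = -(((n % k : ℕ) : ℝ) / (n * k)) := by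
            field_simp
            nlinarith [hmod]
          rw [he, abs_neg, abs_of_nonneg (by positivity)]
          rw [div_le_div_iff₀ (by positivity) hnR]
          nlinarith
        · exact tendsto_one_div_atTop_nhds_zero_nat
      have h2 := hdiff.add (tendsto_const_nhds (x := 1 / (k:ℝ)))
      simpa using h2
    have hs : Tendsto (fun n : ℕ =>
        (∑ i ∈ Finset.range (n / k), X (i * k) ((i + 1) * k) ω) / ((n / k : ℕ) : ℝ))
        atTop (𝓝 (a k)) := hω1.comp hqq
    have hprod : Tendsto (fun n : ℕ =>
        (∑ i ∈ Finset.range (n / k), X (i * k) ((i + 1) * k) ω) / ((n / k : ℕ) : ℝ)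
          * (((n / k : ℕ) : ℝ) / n)) atTop (𝓝 (a k * (1 / k))) := hs.mul hqn
    have hSn : Tendsto (fun n : ℕ =>
        (∑ i ∈ Finset.range (n / k), X (i * k) ((i + 1) * k) ω) / (n : ℝ))
        atTop (𝓝 (a k / k)) := by
      have heq : ∀ᶠ n : ℕ in atTop,
          (∑ i ∈ Finset.range (n / k), X (i * k) ((i + 1) * k) ω) / ((n / k : ℕ) : ℝ)
            * (((n / k : ℕ) : ℝ) / n)
          = (∑ i ∈ Finset.range (n / k), X (i * k) ((i + 1) * k) ω) / (n : ℝ) := by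
        filter_upwards [hqq.eventually_ge_atTop 1] with n hn
        have hqR : ((n / k : ℕ) : ℝ) ≠ 0 := by
          have : (0:ℕ) < n / k := hn
          positivity
        field_simp
      have := hprod.congr' heq
      rwa [mul_one_div] at this
    have ev1 : ∀ᶠ n : ℕ in atTop,
        (∑ i ∈ Finset.range (n / k), X (i * k) ((i + 1) * k) ω) / (n : ℝ)
          ≤ a k / k + 1 / k := by
      have : a k / k < a k / k + 1 / k := by
        have : (0:ℝ) < 1 / k := by positivity
        linarith
      filter_upwards [hSn.eventually (eventually_le_nhds this)] with n hn using hn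
    have hremAll : ∀ᶠ q : ℕ in atTop, ∀ r ∈ Finset.range k, X (q * k) (q * k + r) ω ≤ q :=
      (Finset.range k).eventually_all.2 (fun r _ => hω2 r)
    have ev2 : ∀ᶠ n : ℕ in atTop, X ((n / k) * k) n ω ≤ ((n / k : ℕ) : ℝ) := by
      filter_upwards [hqq.eventually hremAll] with n hn
      have hr : n % k ∈ Finset.range k := Finset.mem_range.2 (Nat.mod_lt n hk0)
      have := hn (n % k) hr
      rw [show n / k * k + n % k = n from by rw [mul_comm]; exact Nat.div_add_mod n k] at this
      exact_mod_cast this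
    filter_upwards [ev1, ev2, hqq.eventually_ge_atTop 1, eventually_ge_atTop 1]
      with n h1 h2 h3 hn1
    have hnR : (0:ℝ) < n := by exact_mod_cast hn1
    have hqk : n / k * k ≤ n := Nat.div_mul_le_self n k
    have step1 : X 0 n ω ≤ X 0 (n / k * k) ω + X (n / k * k) n ω := hsub _ n hqk ω
    have step2 : X 0 (n / k * k) ω ≤ ∑ i ∈ Finset.range (n / k), X (i * k) ((i + 1) * k) ω :=
      hchain k ω (n / k) h3
    have hqn' : ((n / k : ℕ) : ℝ) / n ≤ 1 / k := by
      rw [div_le_div_iff₀ hnR hkR]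
      have : ((n / k : ℕ) : ℝ) * k ≤ n := by exact_mod_cast Nat.div_mul_le_self n k
      linarith
    calc X 0 n ω / n ≤ (X 0 (n / k * k) ω + X (n / k * k) n ω) / n :=
          (div_le_div_iff_of_pos_right hnR).2 step1
      _ = X 0 (n / k * k) ω / n + X (n / k * k) n ω / n := add_div _ _ _
      _ ≤ (∑ i ∈ Finset.range (n / k), X (i * k) ((i + 1) * k) ω) / n
            + ((n / k : ℕ) : ℝ) / n := by
          gcongr
      _ ≤ (a k / k + 1 / k) + 1 / k := add_le_add h1 hqn'
      _ = a k / k + 2 / k := by ring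
  
  have hup' : ∀ᵐ ω ∂μ, ∀ δ : ℝ, 0 < δ → ∀ᶠ n : ℕ in atTop, X 0 n ω / n ≤ v + δ := by
    have h2k : Tendsto (fun k : ℕ => 2 / (k:ℝ)) atTop (𝓝 0) := by
      have h0 := tendsto_one_div_atTop_nhds_zero_nat.const_mul (2:ℝ)
      have he : ∀ k : ℕ, (2:ℝ) * (1 / k) = 2 / k := fun k => by ring
      simpa [he, div_eq_mul_inv] using h0
    have hvk : Tendsto (fun k : ℕ => a k / k + 2 / k) atTop (𝓝 v) := by
      have := hak.add h2k
      simpa using this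
    filter_upwards [hup] with ω hω
    intro δ hδ
    have hev : ∀ᶠ k : ℕ in atTop, a k / k + 2 / k < v + δ :=
      hvk.eventually_lt_const (by linarith)
    obtain ⟨k, hk1, hk2⟩ := (hev.and (eventually_ge_atTop 1)).exists
    exact (hω k hk2).mono fun n hn => le_trans hn hk1.le
  -- the truncation level
  set M : ℝ := |v| + 2 with hMdef
  have hM0 : 0 ≤ M := by positivity
  have hMv : |v| + 2 ≤ M := le_of_eq hMdef.symm
  -- the truncated liminf random variables
  set ℓ : ℕ → Ω → ℝ := fun m ω => lseEll M (fun k => X m (m + k) ω) with hℓdef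
  set ℓs : Ω → ℝ := fun ω => lseEll M (fun k => X 0 k ω) with hℓsdef
  have hℓmeas : ∀ m, Measurable (ℓ m) := fun m => measurable_lseEll.comp (hseqm m)
  have hℓsmeas : Measurable ℓs := measurable_lseEll.comp hseq0
  have hℓbdd : ∀ m ω, -M ≤ ℓ m ω ∧ ℓ m ω ≤ M :=
    fun m ω => ⟨lseEll_bddBelow hM0 _, lseEll_le hM0 _⟩
  have hℓsbdd : ∀ ω, -M ≤ ℓs ω ∧ ℓs ω ≤ M :=
    fun ω => ⟨lseEll_bddBelow hM0 _, lseEll_le hM0 _⟩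
  have hℓint : ∀ m, Integrable (ℓ m) μ := by
    intro m
    refine Integrable.mono' (integrable_const M) (hℓmeas m).aestronglyMeasurable ?_
    exact Eventually.of_forall fun ω =>
      abs_le.2 ⟨(hℓbdd m ω).1, (hℓbdd m ω).2⟩
  have hℓsint : Integrable ℓs μ := by
    refine Integrable.mono' (integrable_const M) hℓsmeas.aestronglyMeasurable ?_
    exact Eventually.of_forall fun ω => abs_le.2 ⟨(hℓsbdd ω).1, (hℓsbdd ω).2⟩
  -- a.e. upper bound for the truncated liminf
  have hℓsv : ∀ᵐ ω ∂μ, ℓs ω ≤ v := by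
    filter_upwards [hup'] with ω hω
    apply le_of_forall_pos_le_add
    intro δ hδ
    apply lseEll_le_of_frequently_le
    apply Eventually.frequently
    filter_upwards [hω δ hδ] with n hn
    exact lseClamp_le_of_le (by rw [hMdef]; cases abs_cases v with
      | inl h => linarith [h.1] | inr h => linarith [h.1]) hn
  -- pointwise monotonicity of the truncated liminf along shifts
  have hℓ0m : ∀ ω, ∀ m : ℕ, ℓs ω ≤ ℓ m ω := by
    intro ω m
    apply le_of_forall_pos_le_add
    intro δ hδ
    rcases le_or_gt (M - δ/2) (ℓ m ω) with hcase | hcase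
    · have h1 : ℓs ω ≤ M := lseEll_le hM0 _
      linarith
    · set c : ℝ := X 0 m ω with hc
      set b : ℝ := ℓ m ω + δ/2 with hb
      have hbM : b < M := by rw [hb]; linarith
      have hℓmb : -M ≤ ℓ m ω := (hℓbdd m ω).1
      have hfreq : ∃ᶠ t : ℕ in atTop, lseClamp M (X m (m + t) ω / t) < b :=
        frequently_of_lseEll_lt hM0 (show lseEll M (fun k => X m (m + k) ω) < b by
          rw [hb]; change ℓ m ω < _; linarith)
      have htend : Tendsto (fun t : ℕ => (c + t * b) / ((m:ℝ) + t)) atTop (𝓝 b) := by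
        have hA : Tendsto (fun x : ℝ => b + (c - m * b) / ((m:ℝ) + x)) atTop (𝓝 (b + 0)) :=
          tendsto_const_nhds.add (tendsto_const_nhds.div_atTop
            (tendsto_atTop_add_const_left atTop _ tendsto_id))
        have hB : ∀ᶠ x : ℝ in atTop, b + (c - m * b) / ((m:ℝ) + x) = (c + x * b) / ((m:ℝ) + x) := by
          filter_upwards [eventually_gt_atTop 0] with x hx
          have hmx : (0:ℝ) < (m:ℝ) + x := by positivity
          field_simp
          ring
        have hA' : Tendsto (fun x : ℝ => (c + x * b) / ((m:ℝ) + x)) atTop (𝓝 b) := by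
          have := hA.congr' hB
          simpa using this
        exact hA'.comp tendsto_natCast_atTop_atTop
      have hev : ∀ᶠ t : ℕ in atTop, (c + t * b) / ((m:ℝ) + t) ≤ ℓ m ω + δ :=
        htend.eventually (eventually_le_nhds (show b < ℓ m ω + δ by rw [hb]; linarith))
      rw [eventually_atTop] at hev
      obtain ⟨t₀, ht₀⟩ := hev
      have hfreq2 : ∃ᶠ s : ℕ in atTop, lseClamp M (X 0 s ω / s) ≤ ℓ m ω + δ := by
        rw [frequently_atTop] at hfreq ⊢
        intro N
        obtain ⟨t, ht, htp⟩ := hfreq (max (max N t₀) 1)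
        have ht1 : 1 ≤ t := le_trans (le_max_right _ _) ht
        have htt0 : t₀ ≤ t := le_trans (le_trans (le_max_right _ _) (le_max_left _ _)) ht
        have htN : N ≤ t := le_trans (le_trans (le_max_left _ _) (le_max_left _ _)) ht
        refine ⟨m + t, le_trans htN (Nat.le_add_left t m), ?_⟩
        have htR : (0:ℝ) < t := by exact_mod_cast ht1
        have hmtR : (0:ℝ) < (m:ℝ) + t := by positivity
        have hu : X m (m + t) ω / t ≤ b := le_of_lseClamp_le hbM htp.le
        have hXmt : X m (m + t) ω ≤ t * b := by
          have := (div_le_iff₀ htR).1 hu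
          linarith
        have hsum : X 0 (m + t) ω ≤ c + t * b := by
          have := hsub m (m + t) (Nat.le_add_right m t) ω
          rw [hc]; linarith
        have hdiv : X 0 (m + t) ω / ((m:ℝ) + t) ≤ ℓ m ω + δ := by
          refine le_trans ?_ (ht₀ t htt0)
          exact div_le_div_of_nonneg_right hsum hmtR.le |>.trans_eq rfl
        have hcast : ((m + t : ℕ) : ℝ) = (m:ℝ) + t := by push_cast; ring
        refine lseClamp_le_of_le (by linarith) ?_
        rw [hcast]
        exact hdiv
      exact lseEll_le_of_frequently_le hfreq2
  -- a.e. equality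
  have hℓeq : ∀ᵐ ω ∂μ, ∀ m : ℕ, ℓ m ω = ℓs ω := by
    rw [ae_all_iff]
    intro m
    have hid : IdentDistrib (ℓ m) ℓs μ μ := hID m (lseEll M) measurable_lseEll
    have hmean : ∫ ω, ℓ m ω ∂μ = ∫ ω, ℓs ω ∂μ := hid.integral_eq
    have hnn : 0 ≤ᵐ[μ] fun ω => ℓ m ω - ℓs ω :=
      Eventually.of_forall fun ω => sub_nonneg.2 (hℓ0m ω m)
    have hzero : ∫ ω, (ℓ m ω - ℓs ω) ∂μ = 0 := by
      rw [integral_sub (hℓint m) hℓsint, hmean]; ring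
    have h0 := (integral_eq_zero_iff_of_nonneg_ae hnn ((hℓint m).sub hℓsint)).1 hzero
    filter_upwards [h0] with ω hω
    have : ℓ m ω - ℓs ω = 0 := hω
    linarith
  -- the key lower bound on the expectation
  have hEℓ : ∀ ε : ℝ, 0 < ε → ε < 1 → v ≤ (∫ ω, ℓs ω ∂μ) + ε := by
    intro ε hε hε1
    -- stopping times
    set T : ℕ → Ω → ℕ := fun m ω => lseT M ε (fun k => X m (m + k) ω) with hT
    have hTprop : ∀ m ω, 1 ≤ T m ω → X m (m + T m ω) ω ≤ (ℓ m ω + ε) * (T m ω) := by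
      intro m ω h1
      exact lseT_spec (y := fun k => X m (m + k) ω) h1
    set Ts : Ω → ℕ := fun ω => lseT M ε (fun k => X 0 k ω) with hTs
    have habsv : v < M - 1 := by
      rw [hMdef]
      rcases abs_cases v with ⟨h, _⟩ | ⟨h, _⟩ <;> linarith
    have hTs1 : ∀ᵐ ω ∂μ, 1 ≤ Ts ω := by
      filter_upwards [hℓsv] with ω hω
      by_contra h0
      have h0' : Ts ω = 0 := by omega
      rw [hTs] at h0'
      have hall := lseT_eq_zero_iff.1 h0'
      have hlt : lseEll M (fun k => X 0 k ω) < ℓs ω + ε := by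
        change ℓs ω < _
        linarith
      obtain ⟨t, ht1, htp⟩ := (frequently_atTop.1 (frequently_of_lseEll_lt hM0 hlt)) 1
      have hbM : ℓs ω + ε < M := by linarith
      have hx : X 0 t ω / t ≤ ℓs ω + ε := le_of_lseClamp_le hbM htp.le
      have htR : (0:ℝ) < t := by exact_mod_cast ht1
      refine hall t ⟨ht1, ?_⟩
      have := (div_le_iff₀ htR).1 hx
      calc X 0 t ω ≤ (ℓs ω + ε) * t := by linarith
        _ = (lseEll M (fun k => X 0 k ω) + ε) * t := rfl
    -- the penalty functions
    set bInd : ℕ → ℕ → ℕ → Ω → ℝ := fun L N m ω =>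
      if (¬(1 ≤ T m ω ∧ T m ω ≤ L) ∨ N < m + L)
      then max (X m (m + 1) ω - ℓ m ω - ε) 0 else 0 with hbInd
    have hbnn : ∀ L N m ω, 0 ≤ bInd L N m ω := by
      intro L N m ω
      simp only [hbInd]
      split
      · exact le_max_right _ _
      · exact le_rfl
    have hTmeas : ∀ m, Measurable (T m) := fun m => measurable_lseT.comp (hseqm m)
    have hbmeas : ∀ L N m, Measurable (bInd L N m) := by
      intro L N m
      apply Measurable.ite
      · have h1 : MeasurableSet {ω | 1 ≤ T m ω ∧ T m ω ≤ L} := by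
          have : {ω | 1 ≤ T m ω ∧ T m ω ≤ L} = T m ⁻¹' (Set.Icc 1 L) := by
            ext ω; simp [Set.mem_Icc]
          rw [this]
          exact (hTmeas m) measurableSet_Icc
        have h2 : MeasurableSet {ω : Ω | N < m + L} := by
          by_cases h : N < m + L
          · have he : {ω : Ω | N < m + L} = Set.univ := by ext ω; simp [h]
            rw [he]; exact MeasurableSet.univ
          · have he : {ω : Ω | N < m + L} = ∅ := by ext ω; simp [h]
            rw [he]; exact MeasurableSet.empty
        have : {ω | ¬(1 ≤ T m ω ∧ T m ω ≤ L) ∨ N < m + L}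
            = {ω | 1 ≤ T m ω ∧ T m ω ≤ L}ᶜ ∪ {ω : Ω | N < m + L} := by
          ext ω; simp
        rw [this]
        exact h1.compl.union h2
      · exact ((((hmeas m (m + 1)).sub (hℓmeas m)).sub_const ε).max measurable_const)
      · exact measurable_const
    have hbbd : ∀ L N m ω, bInd L N m ω ≤ |X m (m + 1) ω| + M := by
      intro L N m ω
      have h1 : -M ≤ ℓ m ω := (hℓbdd m ω).1
      have h2 : X m (m + 1) ω - ℓ m ω - ε ≤ |X m (m + 1) ω| + M :=
        by have := le_abs_self (X m (m + 1) ω); linarith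
      have h3 : (0:ℝ) ≤ |X m (m + 1) ω| + M := by positivity
      simp only [hbInd]
      split
      · exact max_le h2 h3
      · exact h3
    have hbint : ∀ L N m, Integrable (bInd L N m) μ := by
      intro L N m
      refine Integrable.mono' ((hint m (m + 1)).abs.add (integrable_const M))
        (hbmeas L N m).aestronglyMeasurable ?_
      refine Eventually.of_forall fun ω => ?_
      rw [Real.norm_eq_abs, abs_of_nonneg (hbnn L N m ω)]
      exact hbbd L N m ω
    -- the covering inequality
    have hcov : ∀ᵐ ω ∂μ, ∀ L N : ℕ,
        X 0 N ω ≤ X 0 0 ω + N * (ℓs ω + ε) + ∑ m ∈ Finset.range N, bInd L N m ω := by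
      filter_upwards [hℓeq] with ω hω
      intro L N
      set step : ℕ → ℕ := fun m =>
        if 1 ≤ T m ω ∧ T m ω ≤ L ∧ m + T m ω ≤ N then T m ω else 1 with hstepdef
      have hstep1 : ∀ m, 1 ≤ step m := by
        intro m
        simp only [hstepdef]
        split
        · omega
        · exact le_rfl
      set σ : ℕ → ℕ := fun j => Nat.rec 0 (fun _ s => s + step s) j with hσdef
      have hσs : ∀ j, σ (j + 1) = σ j + step (σ j) := fun j => rfl
      have hσmono : ∀ j, σ j < σ (j + 1) := by
        intro j
        have := hstep1 (σ j)
        rw [hσs j]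
        omega
      have hσge : ∀ j, j ≤ σ j := by
        intro j
        induction j with
        | zero => exact Nat.zero_le _
        | succ j ih => have := hσmono j; omega
      have hpay : ∀ m, X m (m + step m) ω ≤ (step m : ℝ) * (ℓs ω + ε) + bInd L N m ω := by
        intro m
        by_cases h : 1 ≤ T m ω ∧ T m ω ≤ L ∧ m + T m ω ≤ N
        · have hstepm : step m = T m ω := by simp only [hstepdef]; rw [if_pos h]
          have h2 := hTprop m ω h.1
          have h3 : ℓ m ω = ℓs ω := hω m
          have h4 : 0 ≤ bInd L N m ω := hbnn L N m ω
          rw [hstepm]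
          calc X m (m + T m ω) ω ≤ (ℓ m ω + ε) * T m ω := h2
            _ = (T m ω : ℝ) * (ℓs ω + ε) := by rw [h3]; ring
            _ ≤ _ := le_add_of_nonneg_right h4
        · have hstepm : step m = 1 := by simp only [hstepdef]; rw [if_neg h]
          have hbad : (¬(1 ≤ T m ω ∧ T m ω ≤ L) ∨ N < m + L) := by
            by_cases h1 : 1 ≤ T m ω ∧ T m ω ≤ L
            · right
              have h2 : ¬ (m + T m ω ≤ N) := by tauto
              omega
            · left; exact h1
          have hbeq : bInd L N m ω = max (X m (m + 1) ω - ℓ m ω - ε) 0 := by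
            simp only [hbInd]; rw [if_pos hbad]
          rw [hstepm, hbeq, hω m]
          have h5 := le_max_left (X m (m + 1) ω - ℓs ω - ε) (0:ℝ)
          push_cast
          linarith
      have hacc : ∀ j, X 0 (σ j) ω ≤ X 0 0 ω + (σ j : ℝ) * (ℓs ω + ε)
          + ∑ m ∈ Finset.range (σ j), bInd L N m ω := by
        intro j
        induction j with
        | zero =>
          have h0 : σ 0 = 0 := rfl
          rw [h0]
          simp
        | succ j ih =>
          have h1 : X 0 (σ (j + 1)) ω ≤ X 0 (σ j) ω + X (σ j) (σ (j + 1)) ω :=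
            hsub _ _ (hσmono j).le ω
          have h2 : X (σ j) (σ (j + 1)) ω
              ≤ (step (σ j) : ℝ) * (ℓs ω + ε) + bInd L N (σ j) ω := by
            have h0 := hpay (σ j)
            rw [hσs j]
            exact h0
          have h3 : ∑ m ∈ Finset.range (σ j), bInd L N m ω + bInd L N (σ j) ω
              ≤ ∑ m ∈ Finset.range (σ (j + 1)), bInd L N m ω := by
            have hle : σ j + 1 ≤ σ (j + 1) := hσmono j
            calc ∑ m ∈ Finset.range (σ j), bInd L N m ω + bInd L N (σ j) ω
                = ∑ m ∈ Finset.range (σ j + 1), bInd L N m ω := (Finset.sum_range_succ _ _).symm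
              _ ≤ ∑ m ∈ Finset.range (σ (j + 1)), bInd L N m ω := by
                  apply Finset.sum_le_sum_of_subset_of_nonneg (Finset.range_subset_range.2 hle)
                  intro i _ _
                  exact hbnn L N i ω
          have hcast : (σ (j + 1) : ℝ) = (σ j : ℝ) + (step (σ j) : ℝ) := by
            rw [hσs j]; push_cast; ring
          calc X 0 (σ (j + 1)) ω ≤ X 0 (σ j) ω + X (σ j) (σ (j + 1)) ω := h1
            _ ≤ (X 0 0 ω + (σ j : ℝ) * (ℓs ω + ε) + ∑ m ∈ Finset.range (σ j), bInd L N m ω)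
                + ((step (σ j) : ℝ) * (ℓs ω + ε) + bInd L N (σ j) ω) := add_le_add ih h2
            _ ≤ _ := by
                rw [hcast, add_mul]
                linarith [h3]
      have hreach : ∃ j, σ j = N := by
        have hex : ∃ j, N ≤ σ j := ⟨N, hσge N⟩
        rcases Nat.eq_zero_or_pos (Nat.find hex) with h0 | hpos
        · refine ⟨0, ?_⟩
          have hsp := Nat.find_spec hex
          rw [h0] at hsp
          have hσ0 : σ 0 = 0 := rfl
          omega
        · set i := Nat.find hex - 1 with hidef
          have hi1 : i + 1 = Nat.find hex := by omega
          have hspec : N ≤ σ (i + 1) := by rw [hi1]; exact Nat.find_spec hex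
          have hnot : ¬ N ≤ σ i := Nat.find_min hex (by omega)
          refine ⟨i + 1, le_antisymm ?_ hspec⟩
          rw [hσs i]
          by_cases hc : 1 ≤ T (σ i) ω ∧ T (σ i) ω ≤ L ∧ σ i + T (σ i) ω ≤ N
          · have hs : step (σ i) = T (σ i) ω := by simp only [hstepdef]; rw [if_pos hc]
            rw [hs]
            exact hc.2.2
          · have hs : step (σ i) = 1 := by simp only [hstepdef]; rw [if_neg hc]
            rw [hs]
            omega
      obtain ⟨J, hJ⟩ := hreach
      have hfin := hacc J
      rw [hJ] at hfin
      exact hfin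
    -- the penalty functional on sequence space and its integral
    set Φ : ℕ → (ℕ → ℝ) → ℝ := fun L y =>
      if ¬(1 ≤ lseT M ε y ∧ lseT M ε y ≤ L) then max (y 1 - lseEll M y - ε) 0 else 0 with hΦ
    have hΦmeas : ∀ L, Measurable (Φ L) := by
      intro L
      apply Measurable.ite
      · have h1 : MeasurableSet {y : ℕ → ℝ | 1 ≤ lseT M ε y ∧ lseT M ε y ≤ L} := by
          have he : {y : ℕ → ℝ | 1 ≤ lseT M ε y ∧ lseT M ε y ≤ L}
              = lseT M ε ⁻¹' (Set.Icc 1 L) := by ext y; simp [Set.mem_Icc]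
          rw [he]
          exact measurable_lseT measurableSet_Icc
        have he2 : {y : ℕ → ℝ | ¬(1 ≤ lseT M ε y ∧ lseT M ε y ≤ L)}
            = {y : ℕ → ℝ | 1 ≤ lseT M ε y ∧ lseT M ε y ≤ L}ᶜ := by ext y; simp
        rw [he2]
        exact h1.compl
      · exact (((measurable_pi_apply 1).sub measurable_lseEll).sub_const ε).max measurable_const
      · exact measurable_const
    have hΦnn : ∀ L y, 0 ≤ Φ L y := by
      intro L y
      simp only [hΦ]
      split
      · exact le_max_right _ _
      · exact le_rfl
    set η : ℕ → ℝ := fun L => ∫ ω, Φ L (fun k => X 0 k ω) ∂μ with hη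
    have hηseqmeas : ∀ L, Measurable fun ω => Φ L (fun k => X 0 k ω) :=
      fun L => (hΦmeas L).comp hseq0
    set G : Ω → ℝ := fun ω => max (X 0 1 ω - ℓs ω - ε) 0 with hG
    have hGint : Integrable G μ := by
      refine Integrable.mono' ((hint 0 1).abs.add (integrable_const M))
        ((((hmeas 0 1).sub hℓsmeas).sub_const ε).max measurable_const).aestronglyMeasurable ?_
      refine Eventually.of_forall fun ω => ?_
      have h1 : -M ≤ ℓs ω := (hℓsbdd ω).1
      have h2 := le_abs_self (X 0 1 ω)
      show ‖max (X 0 1 ω - ℓs ω - ε) 0‖ ≤ |X 0 1 ω| + M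
      rw [Real.norm_eq_abs, abs_of_nonneg (le_max_right _ _)]
      exact max_le (by linarith) (by positivity)
    have hΦle : ∀ L ω, Φ L (fun k => X 0 k ω) ≤ G ω := by
      intro L ω
      simp only [hΦ, hG]
      split
      · exact le_rfl
      · exact le_max_right _ _
    have hηnn : ∀ L, 0 ≤ η L := fun L => integral_nonneg fun ω => hΦnn L _
    have hηtend : Tendsto η atTop (𝓝 0) := by
      have h0 : Tendsto (fun L : ℕ => ∫ ω, Φ L (fun k => X 0 k ω) ∂μ) atTop
          (𝓝 (∫ _ω, (0:ℝ) ∂μ)) := by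
        apply tendsto_integral_of_dominated_convergence G
          (fun L => (hηseqmeas L).aestronglyMeasurable) hGint
        · intro L
          refine Eventually.of_forall fun ω => ?_
          rw [Real.norm_eq_abs, abs_of_nonneg (hΦnn L _)]
          exact hΦle L ω
        · filter_upwards [hTs1] with ω hω
          apply Tendsto.congr' _ tendsto_const_nhds
          filter_upwards [eventually_ge_atTop (Ts ω)] with L hL
          have hcond : 1 ≤ lseT M ε (fun k => X 0 k ω) ∧ lseT M ε (fun k => X 0 k ω) ≤ L :=
            ⟨hω, hL⟩
          simp only [hΦ]
          rw [if_neg (not_not_intro hcond)]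
      simpa using h0
    have hbeta : ∀ L N m, m + L ≤ N → ∀ ω, bInd L N m ω = Φ L (fun k => X m (m + k) ω) := by
      intro L N m hmL ω
      simp only [hbInd, hΦ]
      by_cases h : 1 ≤ T m ω ∧ T m ω ≤ L
      · rw [if_neg (by push_neg; exact ⟨h, by omega⟩), if_neg (not_not_intro h)]
      · rw [if_pos (Or.inl h), if_pos h]
    have hηm : ∀ L N m, m + L ≤ N → ∫ ω, bInd L N m ω ∂μ = η L := by
      intro L N m hmL
      have h1 : ∫ ω, bInd L N m ω ∂μ = ∫ ω, Φ L (fun k => X m (m + k) ω) ∂μ :=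
        integral_congr_ae (Eventually.of_forall fun ω => hbeta L N m hmL ω)
      rw [h1, hη]
      exact (hID m (Φ L) (hΦmeas L)).integral_eq
    set c : ℝ := (∫ ω, |X 0 1 ω| ∂μ) + M with hcdef
    have hcnn : 0 ≤ c := add_nonneg (integral_nonneg fun ω => abs_nonneg _) hM0
    have hbc : ∀ L N m, ∫ ω, bInd L N m ω ∂μ ≤ c := by
      intro L N m
      calc ∫ ω, bInd L N m ω ∂μ ≤ ∫ ω, (|X m (m + 1) ω| + M) ∂μ := by
            apply integral_mono (hbint L N m) ((hint m (m + 1)).abs.add (integrable_const M))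
            intro ω
            exact hbbd L N m ω
        _ = (∫ ω, |X m (m + 1) ω| ∂μ) + M := by
            rw [integral_add (hint m (m + 1)).abs (integrable_const M), integral_const]
            simp [measure_univ]
        _ = c := by rw [hcdef, habs m 1]
    have hkey : ∀ L N : ℕ,
        a N ≤ a 0 + (N:ℝ) * ((∫ ω, ℓs ω ∂μ) + ε) + (N:ℝ) * η L + (L:ℝ) * c := by
      intro L N
      have hRH : Integrable (fun ω => X 0 0 ω + (N:ℝ) * (ℓs ω + ε)
          + ∑ m ∈ Finset.range N, bInd L N m ω) μ :=
        ((hint 0 0).add ((hℓsint.add (integrable_const ε)).const_mul (N:ℝ))).add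
          (integrable_finset_sum _ fun m _ => hbint L N m)
      have h1 : a N ≤ ∫ ω, (X 0 0 ω + (N:ℝ) * (ℓs ω + ε)
          + ∑ m ∈ Finset.range N, bInd L N m ω) ∂μ := by
        apply integral_mono_ae (hint 0 N) hRH
        filter_upwards [hcov] with ω hω using hω L N
      have h2 : ∫ ω, (X 0 0 ω + (N:ℝ) * (ℓs ω + ε) + ∑ m ∈ Finset.range N, bInd L N m ω) ∂μ
          = a 0 + (N:ℝ) * ((∫ ω, ℓs ω ∂μ) + ε)
            + ∑ m ∈ Finset.range N, ∫ ω, bInd L N m ω ∂μ := by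
        have e5 : Integrable (fun ω => ℓs ω + ε) μ := hℓsint.add (integrable_const ε)
        have e4 : Integrable (fun ω => (N:ℝ) * (ℓs ω + ε)) μ := e5.const_mul (N:ℝ)
        have e3 : Integrable (fun ω => X 0 0 ω) μ := hint 0 0
        have e1 : Integrable (fun ω => X 0 0 ω + (N:ℝ) * (ℓs ω + ε)) μ := e3.add e4
        have e2 : Integrable (fun ω => ∑ m ∈ Finset.range N, bInd L N m ω) μ :=
          integrable_finset_sum _ fun m _ => hbint L N m
        have e6 : Integrable (fun ω => ℓs ω) μ := hℓsint
        have e7 : Integrable (fun ω => (ε:ℝ)) μ := integrable_const ε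
        rw [integral_add e1 e2, integral_add e3 e4,
          integral_finset_sum _ (fun m _ => hbint L N m), integral_const_mul,
          integral_add e6 e7, integral_const]
        simp [measure_univ]
        rfl
      have h3 : ∑ m ∈ Finset.range N, ∫ ω, bInd L N m ω ∂μ ≤ (N:ℝ) * η L + (L:ℝ) * c := by
        have hterm : ∀ m ∈ Finset.range N, ∫ ω, bInd L N m ω ∂μ
            ≤ η L + (if N < m + L then c else 0) := by
          intro m _
          by_cases hc2 : N < m + L
          · rw [if_pos hc2]
            exact le_trans (hbc L N m) (le_add_of_nonneg_left (hηnn L))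
          · rw [if_neg hc2, hηm L N m (by omega)]
            simp
        calc ∑ m ∈ Finset.range N, ∫ ω, bInd L N m ω ∂μ
            ≤ ∑ m ∈ Finset.range N, (η L + if N < m + L then c else 0) :=
              Finset.sum_le_sum hterm
          _ = (N:ℝ) * η L + ∑ m ∈ Finset.range N, (if N < m + L then c else 0) := by
              rw [Finset.sum_add_distrib, Finset.sum_const, Finset.card_range, nsmul_eq_mul]
          _ ≤ (N:ℝ) * η L + (L:ℝ) * c := by
              have h4 : ∑ m ∈ Finset.range N, (if N < m + L then c else 0)
                  = ((Finset.range N).filter (fun m => N < m + L)).card • c := by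
                rw [← Finset.sum_filter, Finset.sum_const]
              have h5 : ((Finset.range N).filter (fun m => N < m + L)).card ≤ L := by
                have hsub : (Finset.range N).filter (fun m => N < m + L)
                    ⊆ Finset.Ico (N - L) N := by
                  intro m hm
                  simp only [Finset.mem_filter, Finset.mem_range] at hm
                  rw [Finset.mem_Ico]
                  omega
                have h6 := Finset.card_le_card hsub
                rw [Nat.card_Ico] at h6
                omega
              have h7 : (((Finset.range N).filter (fun m => N < m + L)).card : ℝ) ≤ (L:ℝ) := by
                exact_mod_cast h5
              rw [h4, nsmul_eq_mul]
              have h8 := mul_le_mul_of_nonneg_right h7 hcnn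
              linarith
      rw [h2] at h1
      linarith
    have hNlim : ∀ L : ℕ, v ≤ (∫ ω, ℓs ω ∂μ) + ε + η L := by
      intro L
      have hev : ∀ᶠ N : ℕ in atTop,
          v ≤ a 0 / N + ((∫ ω, ℓs ω ∂μ) + ε) + η L + (L:ℝ) * c / N := by
        filter_upwards [eventually_ge_atTop 1] with N hN
        have hNR : (0:ℝ) < N := by exact_mod_cast hN
        have h1 := hvle N hN
        have h2 := hkey L N
        have h3 : a N / N ≤ (a 0 + (N:ℝ) * ((∫ ω, ℓs ω ∂μ) + ε)
            + (N:ℝ) * η L + (L:ℝ) * c) / N := div_le_div_of_nonneg_right h2 hNR.le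
        have h4 : (a 0 + (N:ℝ) * ((∫ ω, ℓs ω ∂μ) + ε) + (N:ℝ) * η L + (L:ℝ) * c) / N
            = a 0 / N + ((∫ ω, ℓs ω ∂μ) + ε) + η L + (L:ℝ) * c / N := by
          field_simp
        rw [h4] at h3
        linarith
      have htend : Tendsto (fun N : ℕ =>
          a 0 / N + ((∫ ω, ℓs ω ∂μ) + ε) + η L + (L:ℝ) * c / N) atTop
          (𝓝 (0 + ((∫ ω, ℓs ω ∂μ) + ε) + η L + 0)) := by
        refine Tendsto.add (Tendsto.add (Tendsto.add ?_ tendsto_const_nhds)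
          tendsto_const_nhds) ?_
        · exact tendsto_const_nhds.div_atTop tendsto_natCast_atTop_atTop
        · exact tendsto_const_nhds.div_atTop tendsto_natCast_atTop_atTop
      have h9 := ge_of_tendsto htend hev
      linarith
    have htend2 : Tendsto (fun L : ℕ => (∫ ω, ℓs ω ∂μ) + ε + η L) atTop
        (𝓝 ((∫ ω, ℓs ω ∂μ) + ε + 0)) := tendsto_const_nhds.add hηtend
    have hfin := ge_of_tendsto htend2 (Eventually.of_forall hNlim)
    linarith
  -- conclude that ℓs = v a.e.
  have hℓseq : ∀ᵐ ω ∂μ, ℓs ω = v := by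
    have hvE : v ≤ ∫ ω, ℓs ω ∂μ := by
      apply le_of_forall_pos_le_add
      intro ε hε
      rcases lt_or_ge ε 1 with h1 | h1
      · exact hEℓ ε hε h1
      · exact le_trans (hEℓ (1/2) (by norm_num) (by norm_num)) (by linarith)
    have hnn : 0 ≤ᵐ[μ] fun ω => v - ℓs ω := hℓsv.mono fun ω h => sub_nonneg.2 h
    have hInt : Integrable (fun ω => v - ℓs ω) μ := (integrable_const v).sub hℓsint
    have hle : ∫ ω, (v - ℓs ω) ∂μ ≤ 0 := by
      rw [integral_sub (integrable_const v) hℓsint, integral_const]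
      simp only [probReal_univ, smul_eq_mul, one_mul]
      linarith
    have h0 : ∫ ω, (v - ℓs ω) ∂μ = 0 := le_antisymm hle (integral_nonneg_of_ae hnn)
    have h1 := (integral_eq_zero_iff_of_nonneg_ae hnn hInt).1 h0
    filter_upwards [h1] with ω hω
    have : v - ℓs ω = 0 := hω
    linarith
  -- a.s. convergence
  have main1 : ∀ᵐ ω ∂μ, Tendsto (fun n : ℕ => X 0 n ω / n) atTop (𝓝 v) := by
    filter_upwards [hup', hℓseq] with ω h1 h2
    rw [Metric.tendsto_atTop]
    intro δ hδ
    set δ' : ℝ := min (δ/2) (1/2) with hδ'def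
    have hδ'0 : 0 < δ' := lt_min (by linarith) (by norm_num)
    have hδ'h : δ' ≤ δ/2 := min_le_left _ _
    have hδ'1 : δ' ≤ 1/2 := min_le_right _ _
    have hupper : ∀ᶠ n : ℕ in atTop, X 0 n ω / n ≤ v + δ' := h1 δ' hδ'0
    have hlower : ∀ᶠ n : ℕ in atTop, v - δ' < X 0 n ω / n := by
      by_contra hcon
      rw [Filter.not_eventually] at hcon
      have hfreq : ∃ᶠ n : ℕ in atTop, lseClamp M (X 0 n ω / n) ≤ v - δ' := by
        apply hcon.mono
        intro n hn
        rw [not_lt] at hn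
        refine lseClamp_le_of_le ?_ hn
        rw [hMdef]
        rcases abs_cases v with ⟨h, _⟩ | ⟨h, _⟩ <;> linarith
      have := lseEll_le_of_frequently_le hfreq
      change ℓs ω ≤ v - δ' at this
      rw [h2] at this
      linarith
    obtain ⟨N, hN⟩ := eventually_atTop.1 (hupper.and hlower)
    refine ⟨N, fun n hn => ?_⟩
    obtain ⟨hu, hl⟩ := hN n hn
    rw [Real.dist_eq, abs_lt]
    constructor <;> [linarith; linarith]
  -- L¹ convergence
  have main2 : Tendsto (fun n : ℕ => ∫ ω, |X 0 n ω / n - v| ∂μ) atTop (𝓝 0) := by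
    have hmax : Measurable (fun x : ℝ => max x 0) := measurable_id.max measurable_const
    have hone : (fun (i : ℕ) ω => X (i * 1) ((i + 1) * 1) ω)
        = fun (i : ℕ) ω => X i (i + 1) ω := by
      funext i ω; rw [mul_one, mul_one]
    have hBindep : Pairwise (Function.onFun (IndepFun · · μ) fun (i : ℕ) ω => X i (i + 1) ω) := by
      have h0 := hindep 1 le_rfl
      rw [hone] at h0
      exact fun i j hij => h0.indepFun hij
    have hBid : ∀ i : ℕ, IdentDistrib (fun ω => X i (i + 1) ω) (fun ω => X 0 1 ω) μ μ := by
      intro i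
      have h0 := hident 1 i le_rfl
      simpa [mul_one] using h0
    set Bp : ℕ → Ω → ℝ := fun i ω => max (X i (i + 1) ω) 0 with hBp
    set Bm : ℕ → Ω → ℝ := fun i ω => max (-(X i (i + 1) ω)) 0 with hBm
    set cp : ℝ := ∫ ω, max (X 0 1 ω) 0 ∂μ with hcp
    set cm : ℝ := ∫ ω, max (-(X 0 1 ω)) 0 ∂μ with hcm
    have hmaxneg : Measurable (fun x : ℝ => max (-x) 0) := measurable_neg.max measurable_const
    have hBpint : ∀ i, Integrable (Bp i) μ := fun i => (hint i (i + 1)).pos_part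
    have hBmint : ∀ i, Integrable (Bm i) μ := fun i => (hint i (i + 1)).neg_part
    have hBpid : ∀ i, IdentDistrib (Bp i) (fun ω => max (X 0 1 ω) 0) μ μ :=
      fun i => (hBid i).comp hmax
    have hBmid : ∀ i, IdentDistrib (Bm i) (fun ω => max (-(X 0 1 ω)) 0) μ μ :=
      fun i => (hBid i).comp hmaxneg
    have hBpmean : ∀ i, ∫ ω, Bp i ω ∂μ = cp := fun i => (hBpid i).integral_eq
    have hBmmean : ∀ i, ∫ ω, Bm i ω ∂μ = cm := fun i => (hBmid i).integral_eq
    -- strong laws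
    have hSLp : ∀ᵐ ω ∂μ, Tendsto (fun n : ℕ => (∑ i ∈ Finset.range n, Bp i ω) / n)
        atTop (𝓝 cp) := by
      have h0 := strong_law_ae_real Bp (hBpint 0)
        (fun i j hij => (hBindep hij).comp hmax hmax)
        (fun i => (hBpid i).trans (hBpid 0).symm)
      have he : (μ[Bp 0]) = cp := hBpmean 0
      rwa [he] at h0
    have hSLm : ∀ᵐ ω ∂μ, Tendsto (fun n : ℕ => (∑ i ∈ Finset.range n, Bm i ω) / n)
        atTop (𝓝 cm) := by
      have h0 := strong_law_ae_real Bm (hBmint 0)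
        (fun i j hij => (hBindep hij).comp hmaxneg hmaxneg)
        (fun i => (hBmid i).trans (hBmid 0).symm)
      have he : (μ[Bm 0]) = cm := hBmmean 0
      rwa [he] at h0
    -- Scheffé for the positive part averages
    have hMp : ∀ n : ℕ, Integrable (fun ω => (∑ i ∈ Finset.range n, Bp i ω) / n) μ :=
      fun n => (integrable_finset_sum _ (fun i _ => hBpint i)).div_const _
    have hintp : Tendsto (fun n : ℕ => ∫ ω, (∑ i ∈ Finset.range n, Bp i ω) / n ∂μ)
        atTop (𝓝 (∫ _ω, cp ∂μ)) := by
      have hval : ∀ n : ℕ, 1 ≤ n → ∫ ω, (∑ i ∈ Finset.range n, Bp i ω) / n ∂μ = cp := by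
        intro n hn
        rw [integral_div, integral_finset_sum _ (fun i _ => hBpint i)]
        simp only [hBpmean]
        rw [Finset.sum_const, Finset.card_range, nsmul_eq_mul]
        field_simp
      have : ∫ _ω, cp ∂μ = cp := by simp
      rw [this]
      apply Tendsto.congr' _ (tendsto_const_nhds (x := cp))
      filter_upwards [eventually_ge_atTop 1] with n hn
      exact (hval n hn).symm
    have hSchp : Tendsto (fun n : ℕ =>
        ∫ ω, |(∑ i ∈ Finset.range n, Bp i ω) / n - cp| ∂μ) atTop (𝓝 0) := by
      refine tendsto_integral_abs_sub_zero hMp (integrable_const cp) ?_ ?_ hintp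
      · intro n
        refine Eventually.of_forall fun ω => ?_
        have : (0:ℝ) ≤ ∑ i ∈ Finset.range n, Bp i ω :=
          Finset.sum_nonneg fun i _ => le_max_right _ _
        positivity
      · filter_upwards [hSLp] with ω hω using hω
    have hMm : ∀ n : ℕ, Integrable (fun ω => (∑ i ∈ Finset.range n, Bm i ω) / n) μ :=
      fun n => (integrable_finset_sum _ (fun i _ => hBmint i)).div_const _
    have hintm : Tendsto (fun n : ℕ => ∫ ω, (∑ i ∈ Finset.range n, Bm i ω) / n ∂μ)
        atTop (𝓝 (∫ _ω, cm ∂μ)) := by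
      have hval : ∀ n : ℕ, 1 ≤ n → ∫ ω, (∑ i ∈ Finset.range n, Bm i ω) / n ∂μ = cm := by
        intro n hn
        rw [integral_div, integral_finset_sum _ (fun i _ => hBmint i)]
        simp only [hBmmean]
        rw [Finset.sum_const, Finset.card_range, nsmul_eq_mul]
        field_simp
      have : ∫ _ω, cm ∂μ = cm := by simp
      rw [this]
      apply Tendsto.congr' _ (tendsto_const_nhds (x := cm))
      filter_upwards [eventually_ge_atTop 1] with n hn
      exact (hval n hn).symm
    have hSchm : Tendsto (fun n : ℕ =>
        ∫ ω, |(∑ i ∈ Finset.range n, Bm i ω) / n - cm| ∂μ) atTop (𝓝 0) := by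
      refine tendsto_integral_abs_sub_zero hMm (integrable_const cm) ?_ ?_ hintm
      · intro n
        refine Eventually.of_forall fun ω => ?_
        have : (0:ℝ) ≤ ∑ i ∈ Finset.range n, Bm i ω :=
          Finset.sum_nonneg fun i _ => le_max_right _ _
        positivity
      · filter_upwards [hSLm] with ω hω using hω
    -- Scheffé for Y n
    have hch1 : ∀ ω, ∀ n : ℕ, 1 ≤ n →
        X 0 n ω ≤ ∑ i ∈ Finset.range n, X i (i + 1) ω := by
      intro ω n hn
      have h0 := hchain 1 ω n hn
      simpa [mul_one] using h0
    set Y : ℕ → Ω → ℝ :=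
      fun n ω => (∑ i ∈ Finset.range n, X i (i + 1) ω) / n - X 0 n ω / n with hY
    have hYint : ∀ n, Integrable (Y n) μ := by
      intro n
      exact ((integrable_finset_sum _ (fun i _ => hint i (i + 1))).div_const _).sub
        ((hint 0 n).div_const _)
    have hYnn : ∀ n, 0 ≤ᵐ[μ] Y n := by
      intro n
      refine Eventually.of_forall fun ω => ?_
      rcases Nat.eq_zero_or_pos n with rfl | hn
      · show (0:ℝ) ≤ Y 0 ω
        simp [hY]
      · have hnR : (0:ℝ) < n := by exact_mod_cast hn
        have h1 := hch1 ω n hn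
        show (0:ℝ) ≤ (∑ i ∈ Finset.range n, X i (i + 1) ω) / n - X 0 n ω / n
        have h2 := div_le_div_of_nonneg_right h1 hnR.le
        linarith
    have ha1 : a 1 = cp - cm := by
      rw [hcp, hcm, ← integral_sub (hint 0 1).pos_part (hint 0 1).neg_part]
      show (∫ ω, X 0 1 ω ∂μ) = _
      apply integral_congr_ae
      refine Eventually.of_forall fun ω => ?_
      exact (max_zero_sub_max_neg_zero_eq_self _).symm
    have hB1mean : ∀ i : ℕ, ∫ ω, X i (i + 1) ω ∂μ = a 1 := fun i => (hBid i).integral_eq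
    have hYmean : ∀ n : ℕ, 1 ≤ n → ∫ ω, Y n ω ∂μ = a 1 - a n / n := by
      intro n hn
      rw [hY]
      simp only
      rw [integral_sub ((integrable_finset_sum _ (fun i _ => hint i (i + 1))).div_const _)
        ((hint 0 n).div_const _), integral_div, integral_div,
        integral_finset_sum _ (fun i _ => hint i (i + 1))]
      simp only [hB1mean]
      rw [Finset.sum_const, Finset.card_range, nsmul_eq_mul]
      have hnR : (n:ℝ) ≠ 0 := by positivity
      field_simp
      rfl
    have hYtend : Tendsto (fun n : ℕ => ∫ ω, Y n ω ∂μ) atTop (𝓝 (∫ _ω, (a 1 - v) ∂μ)) := by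
      have h1 : ∫ _ω, (a 1 - v) ∂μ = a 1 - v := by simp
      rw [h1]
      have h2 : Tendsto (fun n : ℕ => a 1 - a n / n) atTop (𝓝 (a 1 - v)) :=
        tendsto_const_nhds.sub hak
      apply Tendsto.congr' _ h2
      filter_upwards [eventually_ge_atTop 1] with n hn
      exact (hYmean n hn).symm
    have hYae : ∀ᵐ ω ∂μ, Tendsto (fun n => Y n ω) atTop (𝓝 (a 1 - v)) := by
      have hSL : ∀ᵐ ω ∂μ, Tendsto (fun n : ℕ =>
          (∑ i ∈ Finset.range n, X i (i + 1) ω) / n) atTop (𝓝 (a 1)) := by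
        have h0 := strong_law_ae_real (fun (i : ℕ) ω => X i (i + 1) ω) (hint 0 1)
          (fun i j hij => hBindep hij)
          (fun i => (hBid i).trans (hBid 0).symm)
        have he : (μ[fun ω => X 0 1 ω]) = a 1 := hB1mean 0
        rwa [he] at h0
      filter_upwards [hSL, main1] with ω h1 h2
      exact h1.sub h2
    have hSchY : Tendsto (fun n : ℕ => ∫ ω, |Y n ω - (a 1 - v)| ∂μ) atTop (𝓝 0) := by
      refine tendsto_integral_abs_sub_zero hYint (integrable_const _) hYnn ?_ hYtend
      filter_upwards [hYae] with ω hω using hω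
    -- assemble
    have hptwise : ∀ n : ℕ, ∀ ω, |X 0 n ω / n - v| ≤
        |(∑ i ∈ Finset.range n, Bp i ω) / n - cp| +
        |(∑ i ∈ Finset.range n, Bm i ω) / n - cm| + |Y n ω - (a 1 - v)| := by
      intro n ω
      have hsplit : ∀ i : ℕ, X i (i + 1) ω = Bp i ω - Bm i ω := by
        intro i
        rw [hBp, hBm]
        simp [max_zero_sub_max_neg_zero_eq_self]
      have hsum : (∑ i ∈ Finset.range n, X i (i + 1) ω)
          = (∑ i ∈ Finset.range n, Bp i ω) - (∑ i ∈ Finset.range n, Bm i ω) := by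
        rw [← Finset.sum_sub_distrib]
        exact Finset.sum_congr rfl fun i _ => hsplit i
      have hkey : X 0 n ω / n - v =
          ((∑ i ∈ Finset.range n, Bp i ω) / n - cp)
          - ((∑ i ∈ Finset.range n, Bm i ω) / n - cm)
          - (Y n ω - (a 1 - v)) := by
        rw [hY]
        simp only
        rw [hsum, ha1, sub_div]
        ring
      rw [hkey]
      calc |((∑ i ∈ Finset.range n, Bp i ω) / n - cp)
          - ((∑ i ∈ Finset.range n, Bm i ω) / n - cm) - (Y n ω - (a 1 - v))|
          ≤ |((∑ i ∈ Finset.range n, Bp i ω) / n - cp)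
            - ((∑ i ∈ Finset.range n, Bm i ω) / n - cm)| + |Y n ω - (a 1 - v)| :=
            abs_sub _ _
        _ ≤ (|(∑ i ∈ Finset.range n, Bp i ω) / n - cp|
            + |(∑ i ∈ Finset.range n, Bm i ω) / n - cm|) + |Y n ω - (a 1 - v)| := by
            have := abs_sub ((∑ i ∈ Finset.range n, Bp i ω) / n - cp)
              ((∑ i ∈ Finset.range n, Bm i ω) / n - cm)
            linarith
    have hbound : ∀ n : ℕ, ∫ ω, |X 0 n ω / n - v| ∂μ ≤
        (∫ ω, |(∑ i ∈ Finset.range n, Bp i ω) / n - cp| ∂μ) +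
        (∫ ω, |(∑ i ∈ Finset.range n, Bm i ω) / n - cm| ∂μ) +
        (∫ ω, |Y n ω - (a 1 - v)| ∂μ) := by
      intro n
      have hi1 : Integrable (fun ω => |(∑ i ∈ Finset.range n, Bp i ω) / n - cp|) μ :=
        ((hMp n).sub (integrable_const cp)).abs
      have hi2 : Integrable (fun ω => |(∑ i ∈ Finset.range n, Bm i ω) / n - cm|) μ :=
        ((hMm n).sub (integrable_const cm)).abs
      have hi3 : Integrable (fun ω => |Y n ω - (a 1 - v)|) μ :=
        ((hYint n).sub (integrable_const _)).abs
      calc ∫ ω, |X 0 n ω / n - v| ∂μ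
          ≤ ∫ ω, (|(∑ i ∈ Finset.range n, Bp i ω) / n - cp|
            + |(∑ i ∈ Finset.range n, Bm i ω) / n - cm| + |Y n ω - (a 1 - v)|) ∂μ := by
            apply integral_mono (((hint 0 n).div_const _).sub (integrable_const v)).abs
              ((hi1.add hi2).add hi3)
            intro ω
            exact hptwise n ω
        _ = _ := by
            have e1 : Integrable (fun ω => |(∑ i ∈ Finset.range n, Bp i ω) / n - cp|
                + |(∑ i ∈ Finset.range n, Bm i ω) / n - cm|) μ := hi1.add hi2
            rw [integral_add e1 hi3, integral_add hi1 hi2]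
    have hnonneg : ∀ n : ℕ, 0 ≤ ∫ ω, |X 0 n ω / n - v| ∂μ :=
      fun n => integral_nonneg fun ω => abs_nonneg _
    have hsum0 : Tendsto (fun n : ℕ =>
        (∫ ω, |(∑ i ∈ Finset.range n, Bp i ω) / n - cp| ∂μ) +
        (∫ ω, |(∑ i ∈ Finset.range n, Bm i ω) / n - cm| ∂μ) +
        (∫ ω, |Y n ω - (a 1 - v)| ∂μ)) atTop (𝓝 0) := by
      have h0 := (hSchp.add hSchm).add hSchY
      rwa [show ((0:ℝ) + 0) + 0 = 0 from by norm_num] at h0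
    exact squeeze_zero hnonneg hbound hsum0
  exact ⟨main1, main2⟩
end

section
/- Decomposition of the walk: if W_t = S⁰_{N⁰_t} + S¹_{N¹_t}, where S⁰ and S¹ are discrete-time random walks with mean increments v₀/γ and v₁/γ respectively and satisfy SLLNs S^i_n/n → v_i/γ a.s., and N⁰_t + N¹_t = N_t with N_t/t → γ a.s., then liminf_{t→∞} t^{-1} W_t = v₀ + (v₁−v₀)·liminf_{t→∞}(γt)^{-1} N¹_t and limsup_{t→∞} t^{-1} W_t = v₁ − (v₁−v₀)·liminf_{t→∞}(γt)^{-1} N⁰_t almost surely. -/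
open MeasureTheory ProbabilityTheory Filter Set
open scoped Topology ENNReal

private lemma aux_comp (h : ℕ → ℝ) (m : ℝ → ℕ) (K : ℝ) (hK : 0 < K)
    (hh : Tendsto (fun n : ℕ => h n / n) atTop (𝓝 0))
    (hm : ∀ᶠ t : ℝ in atTop, (m t : ℝ) ≤ K * t) :
    Tendsto (fun t : ℝ => h (m t) / t) atTop (𝓝 0) := by
  rw [NormedAddCommGroup.tendsto_nhds_zero]
  intro ε hε
  set δ : ℝ := ε / (2 * K) with hδdef
  have hδ : 0 < δ := by positivity
  rw [NormedAddCommGroup.tendsto_nhds_zero] at hh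
  obtain ⟨M, hM⟩ := (hh δ hδ).exists_forall_of_atTop
  set C : ℝ := ∑ k ∈ Finset.range (M + 1), |h k| with hCdef
  have hC : 0 ≤ C := Finset.sum_nonneg fun k _ => abs_nonneg _
  have hbound : ∀ n : ℕ, |h n| ≤ C + δ * n := by
    intro n
    rcases le_or_gt n M with hn | hn
    · have h1 : |h n| ≤ C :=
        Finset.single_le_sum (f := fun k => |h k|) (fun k _ => abs_nonneg _)
          (Finset.mem_range.mpr (Nat.lt_succ_of_le hn))
      have : (0:ℝ) ≤ δ * n := by positivity
      linarith
    · have hn1 : (1:ℝ) ≤ (n:ℝ) := by exact_mod_cast Nat.one_le_iff_ne_zero.mpr (by omega)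
      have hnpos : (0:ℝ) < n := by linarith
      have := hM n hn.le
      rw [norm_div, Real.norm_natCast, Real.norm_eq_abs] at this
      have h2 : |h n| < δ * n := by
        rw [div_lt_iff₀ hnpos] at this; linarith
      linarith
  have hCt : Tendsto (fun t : ℝ => C / t) atTop (𝓝 0) :=
    tendsto_const_nhds.div_atTop tendsto_id
  filter_upwards [hm, eventually_gt_atTop (0:ℝ),
    hCt.eventually_lt_const (show (0:ℝ) < ε / 2 by positivity)] with t htm ht htC
  have hKne : K ≠ 0 := hK.ne'
  have hδK : δ * K = ε / 2 := by rw [hδdef]; field_simp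
  have h1 : |h (m t)| ≤ C + δ * (K * t) := by
    have := hbound (m t)
    have h2 : δ * (m t : ℝ) ≤ δ * (K * t) := by
      apply mul_le_mul_of_nonneg_left htm hδ.le
    linarith
  have h4 : (C + δ * (K * t)) / t = C / t + ε / 2 := by
    rw [← hδK]
    field_simp
  rw [norm_div, Real.norm_eq_abs, Real.norm_eq_abs, abs_of_pos ht]
  calc |h (m t)| / t ≤ (C + δ * (K * t)) / t := (div_le_div_iff_of_pos_right ht).mpr h1
    _ = C / t + ε / 2 := h4
    _ < ε / 2 + ε / 2 := by linarith
    _ = ε := by ring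

private lemma const_mul_liminf {ι : Type*} {F : Filter ι} [F.NeBot] {c : ℝ} (hc : 0 ≤ c)
    (g : ι → ℝ) (cobdd : F.IsCoboundedUnder (· ≥ ·) g) (bdd : F.IsBoundedUnder (· ≥ ·) g) :
    Filter.liminf (fun x => c * g x) F = c * Filter.liminf g F :=
  (Monotone.map_limsInf_of_continuousAt (F := F.map g) (f := fun x => c * x)
    (fun _ _ h => mul_le_mul_of_nonneg_left h hc)
    (continuous_mul_left c).continuousAt cobdd bdd).symm

/-- Lemma 5.2 of the paper (speed vs. density of 1's seen by the walk):
if `W_t = S⁰_{N⁰_t} + S¹_{N¹_t}` with `S^i_n/n → v_i/γ` a.s.,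
`N⁰_t + N¹_t = N_t` and `N_t/t → γ` a.s., then a.s.
`liminf t⁻¹W_t = v₀ + (v₁−v₀)·liminf (γt)⁻¹N¹_t` and
`limsup t⁻¹W_t = v₁ − (v₁−v₀)·liminf (γt)⁻¹N⁰_t`. -/
theorem speed_vs_density
    {Ω : Type*} [MeasurableSpace Ω] (μ : Measure Ω) [IsProbabilityMeasure μ]
    (γ v0 v1 : ℝ) (hγ : 0 < γ) (hv : v0 < v1)
    (S0 S1 : ℕ → Ω → ℝ) (N0 N1 N : ℝ → Ω → ℕ) (W : ℝ → Ω → ℝ)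
    (hdec : ∀ t ω, W t ω = S0 (N0 t ω) ω + S1 (N1 t ω) ω)
    (hsum : ∀ t ω, N0 t ω + N1 t ω = N t ω)
    (hS0 : ∀ᵐ ω ∂μ, Tendsto (fun n : ℕ => S0 n ω / n) atTop (𝓝 (v0 / γ)))
    (hS1 : ∀ᵐ ω ∂μ, Tendsto (fun n : ℕ => S1 n ω / n) atTop (𝓝 (v1 / γ)))
    (hN : ∀ᵐ ω ∂μ, Tendsto (fun t : ℝ => (N t ω : ℝ) / t) atTop (𝓝 γ)) :
    ∀ᵐ ω ∂μ,
      liminf (fun t : ℝ => W t ω / t) atTop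
          = v0 + (v1 - v0) * liminf (fun t : ℝ => (N1 t ω : ℝ) / (γ * t)) atTop
        ∧
      limsup (fun t : ℝ => W t ω / t) atTop
          = v1 - (v1 - v0) * liminf (fun t : ℝ => (N0 t ω : ℝ) / (γ * t)) atTop := by
  filter_upwards [hS0, hS1, hN] with ω h0 h1 hn
  set c : ℝ := v1 - v0 with hcdef
  have hc : 0 < c := by simp [hcdef]; linarith
  set g0 : ℝ → ℝ := fun t => (N0 t ω : ℝ) / (γ * t) with hg0def
  set g1 : ℝ → ℝ := fun t => (N1 t ω : ℝ) / (γ * t) with hg1def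
  -- cast of hsum
  have hsR : ∀ t, (N0 t ω : ℝ) + (N1 t ω : ℝ) = (N t ω : ℝ) := by
    intro t; exact_mod_cast congrArg (Nat.cast : ℕ → ℝ) (hsum t ω)
  -- eventual bound on N
  have hNbd : ∀ᶠ t : ℝ in atTop, (N t ω : ℝ) ≤ (γ + 1) * t := by
    filter_upwards [eventually_gt_atTop (0:ℝ),
      hn.eventually_le_const (lt_add_one γ)] with t ht hlt
    rw [div_le_iff₀ ht] at hlt
    exact hlt
  have hN0bd : ∀ᶠ t : ℝ in atTop, (N0 t ω : ℝ) ≤ (γ + 1) * t := by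
    filter_upwards [hNbd] with t ht
    have : (N0 t ω : ℝ) ≤ (N t ω : ℝ) := by
      have := hsum t ω; exact_mod_cast Nat.cast_le.mpr (by omega)
    linarith
  have hN1bd : ∀ᶠ t : ℝ in atTop, (N1 t ω : ℝ) ≤ (γ + 1) * t := by
    filter_upwards [hNbd] with t ht
    have : (N1 t ω : ℝ) ≤ (N t ω : ℝ) := by
      have := hsum t ω; exact_mod_cast Nat.cast_le.mpr (by omega)
    linarith
  -- composition error terms
  have herr : ∀ (S : ℕ → ℝ) (v : ℝ) (m : ℝ → ℕ),
      Tendsto (fun n : ℕ => S n / n) atTop (𝓝 (v / γ)) →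
      (∀ᶠ t : ℝ in atTop, (m t : ℝ) ≤ (γ + 1) * t) →
      Tendsto (fun t : ℝ => (S (m t) - (v / γ) * (m t)) / t) atTop (𝓝 0) := by
    intro S v m hS hm
    apply aux_comp (fun n => S n - (v / γ) * n) m (γ + 1) (by linarith) _ hm
    have h1 : Tendsto (fun n : ℕ => S n / n - v / γ) atTop (𝓝 0) := by
      have := hS.sub_const (v / γ); simpa using this
    apply h1.congr'
    filter_upwards [eventually_gt_atTop 0] with n hn
    have hne : (n : ℝ) ≠ 0 := Nat.cast_ne_zero.mpr hn.ne'
    field_simp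
  have he0 : Tendsto (fun t : ℝ => (S0 (N0 t ω) ω - (v0 / γ) * (N0 t ω)) / t) atTop (𝓝 0) :=
    herr (fun n => S0 n ω) v0 (fun t => N0 t ω) h0 hN0bd
  have he1 : Tendsto (fun t : ℝ => (S1 (N1 t ω) ω - (v1 / γ) * (N1 t ω)) / t) atTop (𝓝 0) :=
    herr (fun n => S1 n ω) v1 (fun t => N1 t ω) h1 hN1bd
  -- the main error term
  set ε : ℝ → ℝ := fun t => W t ω / t - (v0 + c * g1 t) with hεdef
  have hε : Tendsto ε atTop (𝓝 0) := by
    have hsum3 : Tendsto (fun t : ℝ =>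
        (S0 (N0 t ω) ω - (v0 / γ) * (N0 t ω)) / t +
        (S1 (N1 t ω) ω - (v1 / γ) * (N1 t ω)) / t +
        ((v0 / γ) * ((N t ω : ℝ) / t) - v0)) atTop (𝓝 0) := by
      have h3 : Tendsto (fun t : ℝ => (v0 / γ) * ((N t ω : ℝ) / t) - v0) atTop (𝓝 0) := by
        have := (hn.const_mul (v0 / γ)).sub_const v0
        have heq : v0 / γ * γ - v0 = 0 := by field_simp; ring
        rwa [heq] at this
      have := (he0.add he1).add h3
      simpa using this
    apply hsum3.congr'
    filter_upwards [eventually_gt_atTop (0:ℝ)] with t ht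
    have htne : t ≠ 0 := ht.ne'
    have hγne : γ ≠ 0 := hγ.ne'
    rw [hεdef]
    simp only [hg1def, hdec t ω, hcdef]
    rw [← hsR t]
    field_simp
    ring
  have hεliminf : liminf ε atTop = 0 := hε.liminf_eq
  have hεlimsup : limsup ε atTop = 0 := hε.limsup_eq
  -- tendsto of N/(γ t) to 1
  have hNg : Tendsto (fun t : ℝ => (N t ω : ℝ) / (γ * t)) atTop (𝓝 1) := by
    have := hn.const_mul (1 / γ)
    have heq : 1 / γ * γ = 1 := by field_simp
    rw [heq] at this
    apply this.congr
    intro t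
    field_simp
  -- bounds on g0, g1
  have hg0nn : ∀ᶠ t : ℝ in atTop, 0 ≤ g0 t := by
    filter_upwards [eventually_gt_atTop (0:ℝ)] with t ht
    exact div_nonneg (Nat.cast_nonneg _) (by positivity)
  have hg1nn : ∀ᶠ t : ℝ in atTop, 0 ≤ g1 t := by
    filter_upwards [eventually_gt_atTop (0:ℝ)] with t ht
    exact div_nonneg (Nat.cast_nonneg _) (by positivity)
  have hgub : ∀ᶠ t : ℝ in atTop, g0 t ≤ 2 ∧ g1 t ≤ 2 := by
    filter_upwards [eventually_gt_atTop (0:ℝ),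
      hNg.eventually_le_const one_lt_two] with t ht hle
    have hγt : (0:ℝ) < γ * t := by positivity
    have h01 : g0 t + g1 t = (N t ω : ℝ) / (γ * t) := by
      rw [hg0def, hg1def]; simp only [← hsR t, add_div]
    have hg0 : 0 ≤ g0 t := div_nonneg (Nat.cast_nonneg _) hγt.le
    have hg1 : 0 ≤ g1 t := div_nonneg (Nat.cast_nonneg _) hγt.le
    constructor <;> linarith
  -- boundedness instances
  have bdd_g1_below : atTop.IsBoundedUnder (· ≥ ·) g1 :=
    isBoundedUnder_of_eventually_ge hg1nn
  have bdd_g1_above : atTop.IsBoundedUnder (· ≤ ·) g1 :=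
    isBoundedUnder_of_eventually_le (hgub.mono fun t h => h.2)
  have bdd_g0_below : atTop.IsBoundedUnder (· ≥ ·) g0 :=
    isBoundedUnder_of_eventually_ge hg0nn
  have bdd_g0_above : atTop.IsBoundedUnder (· ≤ ·) g0 :=
    isBoundedUnder_of_eventually_le (hgub.mono fun t h => h.1)
  have cobdd_g1 : atTop.IsCoboundedUnder (· ≥ ·) g1 := bdd_g1_above.isCoboundedUnder_ge
  have cobdd_g0 : atTop.IsCoboundedUnder (· ≥ ·) g0 := bdd_g0_above.isCoboundedUnder_ge
  -- cg1 bounds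
  have bdd_cg1_below : atTop.IsBoundedUnder (· ≥ ·) (fun t => c * g1 t) :=
    isBoundedUnder_of_eventually_ge (hg1nn.mono fun t h => mul_nonneg hc.le h)
  have bdd_cg1_above : atTop.IsBoundedUnder (· ≤ ·) (fun t => c * g1 t) :=
    isBoundedUnder_of_eventually_le ((hgub.mono fun t h =>
      mul_le_mul_of_nonneg_left h.2 hc.le : ∀ᶠ t : ℝ in atTop, c * g1 t ≤ c * 2))
  have cobdd_cg1 : atTop.IsCoboundedUnder (· ≥ ·) (fun t => c * g1 t) :=
    bdd_cg1_above.isCoboundedUnder_ge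
  have bdd_cg0_below : atTop.IsBoundedUnder (· ≥ ·) (fun t => c * g0 t) :=
    isBoundedUnder_of_eventually_ge (hg0nn.mono fun t h => mul_nonneg hc.le h)
  have bdd_cg0_above : atTop.IsBoundedUnder (· ≤ ·) (fun t => c * g0 t) :=
    isBoundedUnder_of_eventually_le ((hgub.mono fun t h =>
      mul_le_mul_of_nonneg_left h.1 hc.le : ∀ᶠ t : ℝ in atTop, c * g0 t ≤ c * 2))
  have cobdd_cg0 : atTop.IsCoboundedUnder (· ≥ ·) (fun t => c * g0 t) :=
    bdd_cg0_above.isCoboundedUnder_ge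
  constructor
  · -- liminf part
    set vf : ℝ → ℝ := fun t => v0 + c * g1 t with hvfdef
    have bdd_vf_below : atTop.IsBoundedUnder (· ≥ ·) vf :=
      isBoundedUnder_of_eventually_ge (a := v0) (hg1nn.mono fun t h => by
        simp only [hvfdef]; nlinarith)
    have bdd_vf_above : atTop.IsBoundedUnder (· ≤ ·) vf :=
      isBoundedUnder_of_eventually_le (a := v0 + c * 2) (hgub.mono fun t h => by
        simp only [hvfdef]; nlinarith [h.2])
    have cobdd_vf : atTop.IsCoboundedUnder (· ≥ ·) vf := bdd_vf_above.isCoboundedUnder_ge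
    have hWeq : (fun t : ℝ => W t ω / t) = ε + vf := by
      funext t; simp only [Pi.add_apply, hεdef, hvfdef]; ring
    have hle1 : liminf (ε + vf) atTop ≤ liminf vf atTop := by
      have := liminf_add_le (f := atTop) (u := ε) (v := vf)
        hε.isBoundedUnder_ge hε.isBoundedUnder_le bdd_vf_below cobdd_vf
      rwa [hεlimsup, zero_add] at this
    have hle2 : liminf vf atTop ≤ liminf (ε + vf) atTop := by
      have := le_liminf_add (f := atTop) (u := ε) (v := vf)
        hε.isBoundedUnder_ge hε.isBoundedUnder_le bdd_vf_below cobdd_vf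
      rwa [hεliminf, zero_add] at this
    have hvf : liminf vf atTop = v0 + c * liminf g1 atTop := by
      rw [hvfdef]
      rw [liminf_const_add atTop (fun t => c * g1 t) v0 cobdd_cg1 bdd_cg1_below]
      rw [const_mul_liminf hc.le g1 cobdd_g1 bdd_g1_below]
    rw [hWeq, le_antisymm hle1 hle2, hvf]
  · -- limsup part
    set vf : ℝ → ℝ := fun t => v1 - c * g0 t with hvfdef
    set ε' : ℝ → ℝ := fun t => ε t + c * ((N t ω : ℝ) / (γ * t)) - c with hε'def
    have hε' : Tendsto ε' atTop (𝓝 0) := by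
      have := (hε.add (hNg.const_mul c)).sub_const c
      simpa using this
    have hWeq : ∀ᶠ t : ℝ in atTop, W t ω / t = (ε' + vf) t := by
      filter_upwards [eventually_gt_atTop (0:ℝ)] with t ht
      have hγt : (γ * t) ≠ 0 := by positivity
      simp only [Pi.add_apply, hε'def, hεdef, hvfdef, hg0def, hg1def]
      rw [← hsR t, add_div]
      ring
    have bdd_vf_below : atTop.IsBoundedUnder (· ≥ ·) vf :=
      isBoundedUnder_of_eventually_ge (a := v1 - c * 2) (hgub.mono fun t h => by
        simp only [hvfdef]; nlinarith [h.1])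
    have bdd_vf_above : atTop.IsBoundedUnder (· ≤ ·) vf :=
      isBoundedUnder_of_eventually_le (a := v1) (hg0nn.mono fun t h => by
        simp only [hvfdef]; nlinarith)
    have cobdd_vf : atTop.IsCoboundedUnder (· ≤ ·) vf := bdd_vf_below.isCoboundedUnder_le
    have hε'liminf : liminf ε' atTop = 0 := hε'.liminf_eq
    have hε'limsup : limsup ε' atTop = 0 := hε'.limsup_eq
    have hle1 : limsup (ε' + vf) atTop ≤ limsup vf atTop := by
      have := limsup_add_le (f := atTop) (u := ε') (v := vf)
        hε'.isBoundedUnder_ge hε'.isBoundedUnder_le cobdd_vf bdd_vf_above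
      rwa [hε'limsup, zero_add] at this
    have hle2 : limsup vf atTop ≤ limsup (ε' + vf) atTop := by
      have := le_limsup_add (f := atTop) (u := vf) (v := ε')
        bdd_vf_above cobdd_vf hε'.isBoundedUnder_le hε'.isBoundedUnder_ge
      rw [hε'liminf, add_zero] at this
      rwa [show vf + ε' = ε' + vf from add_comm vf ε'] at this
    have hvf : limsup vf atTop = v1 - c * liminf g0 atTop := by
      rw [hvfdef]
      rw [limsup_const_sub atTop (fun t => c * g0 t) v1 cobdd_cg0 bdd_cg0_below]
      rw [const_mul_liminf hc.le g0 cobdd_g0 bdd_g0_below]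
    rw [limsup_congr hWeq, le_antisymm hle1 hle2, hvf]
end

section
/- Let (z_n)_{n∈ℤ\{0}} be an increasing doubly-infinite sequence of integers with z_n/n → 1/ρ as n → ±∞ for some ρ > 0, and let ι > 0. Define the 'safe region' S as the union over n of the upward cones {(y,t) : t ≥ 2/ι, |y − z_n| ≤ (ι/2)t − 1}. Then for every m > 0, the cone V_m = {(x,s) ∈ ℤ×[0,∞) : |x| ≤ ms} intersects the complement of S in a bounded set. -/
open Filter Set
open scoped Topology

set_option maxHeartbeats 2000000 in
/-- Deterministic geometry underlying Proposition 3.4: if `z_n/n → 1/ρ` as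
`n → ±∞` and `S` is the union of the upward cones of inclination `ι/2` with
tips above the points `z_n`, then every cone `V_m` of inclination `m`
intersects the complement of `S` in a bounded set. -/
theorem safe_region_covers_cone
    (ρ ι m : ℝ) (hρ : 0 < ρ) (hι : 0 < ι) (hm : 0 < m)
    (z : ℤ → ℤ) (hmono : StrictMono z)
    (htop : Tendsto (fun n : ℤ => (z n : ℝ) / (n : ℝ)) atTop (𝓝 (1 / ρ)))
    (hbot : Tendsto (fun n : ℤ => (z n : ℝ) / (n : ℝ)) atBot (𝓝 (1 / ρ)))
    (S : Set (ℤ × ℝ))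
    (hS : S = {p : ℤ × ℝ | ∃ n : ℤ,
        2 / ι ≤ p.2 ∧ |(p.1 : ℝ) - (z n : ℝ)| ≤ (ι / 2) * p.2 - 1})
    (V : Set (ℤ × ℝ))
    (hV : V = {p : ℤ × ℝ | 0 ≤ p.2 ∧ |(p.1 : ℝ)| ≤ m * p.2}) :
    ∃ R : ℝ, ∀ p ∈ V ∩ Sᶜ, |(p.1 : ℝ)| ≤ R ∧ p.2 ≤ R := by
  classical
  subst hS hV
  -- growth of a strictly monotone integer sequence
  have hgrow : ∀ a b : ℤ, a ≤ b → b - a ≤ z b - z a := by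
    intro a b hab
    exact Int.le_induction (motive := fun c _ => c - a ≤ z c - z a) (by omega)
      (fun n _ ih => by have h1 := hmono (lt_add_one n); omega) b hab
  -- existence of the interval containing a given integer
  have hfloor : ∀ x : ℤ, ∃ n, z n ≤ x ∧ x < z (n + 1) := by
    intro x
    obtain ⟨n, hn, hmax⟩ := Int.exists_greatest_of_bdd
      (P := fun n => z n ≤ x)
      ⟨max 0 (x - z 0), by
        intro k hk
        have h1 := le_max_left (0 : ℤ) (x - z 0)
        have h2 := le_max_right (0 : ℤ) (x - z 0)
        rcases le_or_gt k 0 with h | h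
        · omega
        · have := hgrow 0 k h.le
          omega⟩
      ⟨min 0 (x - z 0), by
        have h1 := min_le_left (0 : ℤ) (x - z 0)
        have h2 := min_le_right (0 : ℤ) (x - z 0)
        have h3 := hgrow (min 0 (x - z 0)) 0 h1
        omega⟩
    refine ⟨n, hn, ?_⟩
    by_contra h
    push_neg at h
    have := hmax (n + 1) h
    omega
  -- the small parameter
  set ε : ℝ := min (1 / (2 * ρ)) (ι / (24 * ρ * m)) with hεdef
  have hε0 : 0 < ε := lt_min (by positivity) (by positivity)
  have hε1 : ε ≤ 1 / (2 * ρ) := min_le_left _ _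
  have hε2 : ε ≤ ι / (24 * ρ * m) := min_le_right _ _
  -- tail estimates from the limits
  obtain ⟨N1, hN1⟩ : ∃ N1 : ℤ, ∀ n ≥ N1, |(z n : ℝ) / n - 1 / ρ| ≤ ε := by
    have h := (Metric.tendsto_nhds.1 htop) ε hε0
    simp only [Real.dist_eq] at h
    obtain ⟨N1, hN1⟩ := eventually_atTop.1 h
    exact ⟨N1, fun n hn => (hN1 n hn).le⟩
  obtain ⟨N2, hN2⟩ : ∃ N2 : ℤ, ∀ n ≤ N2, |(z n : ℝ) / n - 1 / ρ| ≤ ε := by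
    have h := (Metric.tendsto_nhds.1 hbot) ε hε0
    simp only [Real.dist_eq] at h
    obtain ⟨N2, hN2⟩ := eventually_atBot.1 h
    exact ⟨N2, fun n hn => (hN2 n hn).le⟩
  have habs : ∀ n : ℤ, (n : ℝ) ≠ 0 →
      |(z n : ℝ) - n / ρ| = |(n : ℝ)| * |(z n : ℝ) / n - 1 / ρ| := by
    intro n hn
    rw [← abs_mul]
    congr 1
    field_simp
  -- auxiliary constants
  set b : ℝ := ι / (8 * ρ * m) with hbdef
  have hb : 0 < b := by positivity
  set N : ℤ := max 1 (max N1 (max (-N2) ⌈(1 / ρ + 1) / b⌉)) with hNdef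
  have hN1' : N1 ≤ N := le_trans (le_max_left _ _) (le_max_right _ _)
  have hN2' : -N2 ≤ N :=
    le_trans (le_trans (le_max_left _ _) (le_max_right _ _)) (le_max_right _ _)
  have hNceil : (⌈(1 / ρ + 1) / b⌉ : ℤ) ≤ N :=
    le_trans (le_trans (le_max_right _ _) (le_max_right _ _)) (le_max_right _ _)
  have hN1pos : (1 : ℤ) ≤ N := le_max_left _ _
  set C : ℝ := (z (N + 1) : ℝ) - (z (-(N + 1)) : ℝ) with hCdef
  set T : ℝ := max (2 / ι) (2 / ι * (C + 1)) with hTdef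
  have hTpos : 0 < T := lt_of_lt_of_le (by positivity) (le_max_left _ _)
  -- main claim: every point of the cone above level T is in S
  have key : ∀ (x : ℤ) (t : ℝ), T ≤ t → |(x : ℝ)| ≤ m * t →
      ∃ n : ℤ, 2 / ι ≤ t ∧ |(x : ℝ) - (z n : ℝ)| ≤ ι / 2 * t - 1 := by
    intro x t hT hxt
    obtain ⟨n, hx1, hx2⟩ := hfloor x
    have h2ι : 2 / ι ≤ t := le_trans (le_max_left _ _) hT
    refine ⟨n, h2ι, ?_⟩
    have hx1' : (z n : ℝ) ≤ (x : ℝ) := by exact_mod_cast hx1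
    have hx2' : (x : ℝ) ≤ (z (n + 1) : ℝ) - 1 := by
      have h : x + 1 ≤ z (n + 1) := hx2
      have h' : ((x : ℝ) + 1) ≤ (z (n + 1) : ℝ) := by exact_mod_cast h
      linarith
    suffices hgap : (z (n + 1) : ℝ) - (z n : ℝ) ≤ ι / 2 * t by
      rw [abs_of_nonneg (by linarith)]
      linarith
    -- bound on the ceiling constant
    have hceil : (1 / ρ + 1) / b ≤ (N : ℝ) := by
      have := Int.le_ceil ((1 / ρ + 1) / b)
      have h2 : ((⌈(1 / ρ + 1) / b⌉ : ℤ) : ℝ) ≤ (N : ℝ) := by exact_mod_cast hNceil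
      linarith
    have hbN : 1 / ρ + 1 ≤ b * (N : ℝ) := by
      rw [div_le_iff₀ hb] at hceil
      linarith
    have h3εb : 3 * ε ≤ b := by
      rw [hbdef]
      have : 3 * (ι / (24 * ρ * m)) = ι / (8 * ρ * m) := by ring
      linarith
    have hερ : 1 / (2 * ρ) ≤ 1 / ρ - ε := by
      have : 1 / ρ - 1 / (2 * ρ) = 1 / (2 * ρ) := by field_simp; ring
      linarith
    have hbval : 2 * b ≤ ι / 2 * ((1 / ρ - ε) / m) := by
      have h2 : ι / 2 * (1 / (2 * ρ) / m) = 2 * b := by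
        rw [hbdef]; field_simp; ring
      have h1 : ι / 2 * (1 / (2 * ρ) / m) ≤ ι / 2 * ((1 / ρ - ε) / m) := by
        have hd : 1 / (2 * ρ) / m ≤ (1 / ρ - ε) / m :=
          div_le_div_of_nonneg_right hερ hm.le
        exact mul_le_mul_of_nonneg_left hd (by positivity)
      linarith
    rcases le_or_gt (N + 1) n with hn | hn
    · -- right tail: k = n ≥ N + 1
      have hnN : (N : ℝ) ≤ (n : ℝ) := by exact_mod_cast (by omega : N ≤ n)
      have hn1 : (1 : ℝ) ≤ (n : ℝ) := by
        have : (1 : ℤ) ≤ n := by omega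
        exact_mod_cast this
      have hAn : |(z n : ℝ) - n / ρ| ≤ ε * n := by
        have h := hN1 n (by omega)
        have heq := habs n (by positivity)
        rw [heq, abs_of_pos (by linarith : (0:ℝ) < (n:ℝ))]
        have := mul_le_mul_of_nonneg_left h (by linarith : (0:ℝ) ≤ (n:ℝ))
        linarith
      have hAn1 : |(z (n + 1) : ℝ) - (n + 1) / ρ| ≤ ε * (n + 1) := by
        have h := hN1 (n + 1) (by omega)
        have h2 := habs (n + 1) (by push_cast; positivity)
        push_cast at h h2 ⊢
        rw [h2, abs_of_pos (by linarith : (0:ℝ) < (n:ℝ) + 1)]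
        have := mul_le_mul_of_nonneg_left h (by linarith : (0:ℝ) ≤ (n:ℝ) + 1)
        linarith
    -- from the tail estimates
      have hzlo : (n : ℝ) * (1 / ρ - ε) ≤ (z n : ℝ) := by
        have h := (abs_le.1 hAn).1
        have heq : (n : ℝ) * (1 / ρ - ε) = (n : ℝ) / ρ - ε * n := by ring
        linarith
      have hmt : (n : ℝ) * (1 / ρ - ε) ≤ m * t := by
        have hxpos : (0 : ℝ) < (x : ℝ) := by
          have hpos : (0 : ℝ) < (n : ℝ) * (1 / ρ - ε) :=
            mul_pos (by linarith) (by
              have h1 : (0:ℝ) < 1 / (2 * ρ) := by positivity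
              linarith)
          linarith
        calc (n : ℝ) * (1 / ρ - ε) ≤ (z n : ℝ) := hzlo
          _ ≤ (x : ℝ) := hx1'
          _ = |(x : ℝ)| := (abs_of_pos hxpos).symm
          _ ≤ m * t := hxt
      have hgapb : (z (n + 1) : ℝ) - (z n : ℝ) ≤ 1 / ρ + 3 * ε * n := by
        have h1 := (abs_le.1 hAn).1
        have h2 := (abs_le.1 hAn1).2
        have heq : ((n : ℝ) + 1) / ρ - (n : ℝ) / ρ = 1 / ρ := by
          field_simp
          ring
        have hprod : (0:ℝ) ≤ ε * ((n:ℝ) - 1) :=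
          mul_nonneg hε0.le (by linarith)
        push_cast at h2
        nlinarith [h1, h2, heq, hprod]
      -- conclude
      have h1 : 1 / ρ + 1 ≤ b * (n : ℝ) := by
        have := mul_le_mul_of_nonneg_left hnN hb.le
        have hbN' : 1 / ρ + 1 ≤ b * (N : ℝ) := hbN
        linarith
      have ht' : (n : ℝ) * (1 / ρ - ε) / m ≤ t := by
        rw [div_le_iff₀ hm]
        linarith
      have h2 : ι / 2 * ((n : ℝ) * (1 / ρ - ε) / m) ≤ ι / 2 * t :=
        mul_le_mul_of_nonneg_left ht' (by positivity)
      have h3 : 2 * b * (n : ℝ) ≤ ι / 2 * ((n : ℝ) * (1 / ρ - ε) / m) := by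
        have heq : ι / 2 * ((n : ℝ) * (1 / ρ - ε) / m)
            = (n : ℝ) * (ι / 2 * ((1 / ρ - ε) / m)) := by ring
        rw [heq]
        calc 2 * b * (n : ℝ) = (n : ℝ) * (2 * b) := by ring
          _ ≤ (n : ℝ) * (ι / 2 * ((1 / ρ - ε) / m)) :=
            mul_le_mul_of_nonneg_left hbval (by linarith)
      linarith [mul_nonneg (by linarith : (0:ℝ) ≤ b - 3 * ε)
        (by linarith : (0:ℝ) ≤ (n:ℝ))]
    · rcases le_or_gt n (-(N + 2)) with hn' | hn'
      · -- left tail: k = -(n+1) ≥ N + 1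
        set k : ℤ := -(n + 1) with hkdef
        have hkN : N + 1 ≤ k := by omega
        have hk1 : (1 : ℝ) ≤ (k : ℝ) := by
          have : (1 : ℤ) ≤ k := by omega
          exact_mod_cast this
        have hkr : ((n : ℝ) + 1) = -(k : ℝ) := by
          have : (n : ℤ) + 1 = -k := by omega
          exact_mod_cast congrArg (fun j : ℤ => (j : ℝ)) this
        have hAn : |(z n : ℝ) - n / ρ| ≤ ε * ((k : ℝ) + 1) := by
          have h := hN2 n (by omega)
          have h2 := habs n (by
            have : (n : ℝ) ≤ -1 := by exact_mod_cast (by omega : n ≤ -1)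
            linarith)
          rw [h2, abs_of_neg (by nlinarith : (n:ℝ) < 0)]
          have hnk : -(n : ℝ) = (k : ℝ) + 1 := by linarith
          rw [hnk]
          nlinarith
        have hAn1 : |(z (n + 1) : ℝ) - ((n : ℝ) + 1) / ρ| ≤ ε * (k : ℝ) := by
          have h := hN2 (n + 1) (by omega)
          have h2 := habs (n + 1) (by
            rw [Int.cast_add, Int.cast_one, hkr]
            nlinarith)
          push_cast at h h2
          rw [h2, abs_of_neg (by rw [hkr]; nlinarith : (n:ℝ) + 1 < 0)]
          have : -((n : ℝ) + 1) = (k : ℝ) := by rw [hkr]; ring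
          rw [this]
          nlinarith
        have hzhi : (z (n + 1) : ℝ) ≤ -((k : ℝ) * (1 / ρ - ε)) := by
          have h2 := (abs_le.1 hAn1).2
          have heq : ((n : ℝ) + 1) / ρ = -((k : ℝ) / ρ) := by rw [hkr]; ring
          rw [heq] at h2
          have heq2 : -((k : ℝ) * (1 / ρ - ε)) = -((k : ℝ) / ρ) + ε * (k : ℝ) := by
            ring
          rw [heq2]
          linarith
        have hmt : (k : ℝ) * (1 / ρ - ε) ≤ m * t := by
          have hxneg : (x : ℝ) ≤ -((k : ℝ) * (1 / ρ - ε)) := by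
            have hk2 : (0 : ℝ) < (k : ℝ) * (1 / ρ - ε) :=
              mul_pos (by linarith) (by
                have h1 : (0:ℝ) < 1 / (2 * ρ) := by positivity
                linarith)
            linarith [hx2', hzhi]
          calc (k : ℝ) * (1 / ρ - ε) ≤ -(x : ℝ) := by linarith
            _ ≤ |(x : ℝ)| := neg_le_abs _
            _ ≤ m * t := hxt
        have hgapb : (z (n + 1) : ℝ) - (z n : ℝ) ≤ 1 / ρ + 3 * ε * (k : ℝ) := by
          have h1 := (abs_le.1 hAn).1
          have h2 := (abs_le.1 hAn1).2
          have heq : ((n : ℝ) + 1) / ρ - (n : ℝ) / ρ = 1 / ρ := by field_simp; ring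
          have hprod : (0:ℝ) ≤ ε * ((k:ℝ) - 1) := mul_nonneg hε0.le (by linarith)
          nlinarith [h1, h2, heq, hprod]
        have hNk : (N : ℝ) ≤ (k : ℝ) := by
          have : (N : ℤ) ≤ k := by omega
          exact_mod_cast this
        have h1 : 1 / ρ + 1 ≤ b * (k : ℝ) := by
          have := mul_le_mul_of_nonneg_left hNk hb.le
          have hbN' : 1 / ρ + 1 ≤ b * (N : ℝ) := hbN
          linarith
        have ht' : (k : ℝ) * (1 / ρ - ε) / m ≤ t := by
          rw [div_le_iff₀ hm]
          linarith
        have h2 : ι / 2 * ((k : ℝ) * (1 / ρ - ε) / m) ≤ ι / 2 * t :=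
          mul_le_mul_of_nonneg_left ht' (by positivity)
        have h3 : 2 * b * (k : ℝ) ≤ ι / 2 * ((k : ℝ) * (1 / ρ - ε) / m) := by
          have heq : ι / 2 * ((k : ℝ) * (1 / ρ - ε) / m)
              = (k : ℝ) * (ι / 2 * ((1 / ρ - ε) / m)) := by ring
          rw [heq]
          calc 2 * b * (k : ℝ) = (k : ℝ) * (2 * b) := by ring
            _ ≤ (k : ℝ) * (ι / 2 * ((1 / ρ - ε) / m)) :=
              mul_le_mul_of_nonneg_left hbval (by linarith)
        linarith [mul_nonneg (by linarith : (0:ℝ) ≤ b - 3 * ε)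
          (by linarith : (0:ℝ) ≤ (k:ℝ))]
      · -- middle case: -(N+1) ≤ n ≤ N
        have hmid1 : (z (n + 1) : ℝ) ≤ (z (N + 1) : ℝ) := by
          exact_mod_cast hmono.monotone (by omega : n + 1 ≤ N + 1)
        have hmid2 : (z (-(N + 1)) : ℝ) ≤ (z n : ℝ) := by
          exact_mod_cast hmono.monotone (by omega : -(N + 1) ≤ n)
        have hgC : (z (n + 1) : ℝ) - (z n : ℝ) ≤ C := by
          rw [hCdef]; linarith
        have hTC : 2 / ι * (C + 1) ≤ t := le_trans (le_max_right _ _) hT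
        have heq : ι / 2 * (2 / ι * (C + 1)) = C + 1 := by field_simp
        have := mul_le_mul_of_nonneg_left hTC (by positivity : (0:ℝ) ≤ ι / 2)
        rw [heq] at this
        linarith
  -- conclusion
  refine ⟨max T (m * T), ?_⟩
  rintro ⟨x, t⟩ ⟨hpV, hpS⟩
  simp only [mem_setOf_eq] at hpV
  obtain ⟨ht0, hxt⟩ := hpV
  rcases le_or_gt T t with hcase | hcase
  · exact absurd (key x t hcase hxt) hpS
  · constructor
    · calc |(x : ℝ)| ≤ m * t := hxt
        _ ≤ m * T := by nlinarith
        _ ≤ max T (m * T) := le_max_right _ _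
    · exact le_trans hcase.le (le_max_left _ _)
end
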